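/- arXiv:2003.08292 — 6 statements merged into one kernel-verified Lean document; each statement's English description precedes it below -/
import Mathlib

section
/- Let $X$ and $Y$ be two non-negative random variables such that for every $x>0$, $x\,\mathbb{P}(X>x) \le \mathbb{E}[Y\,\mathbf 1\{X\ge x\}]$. Then for every $t>0$, $\mathbb{P}(X>2t) \le \int_1^{\infty} \mathbb{P}(Y>st)\,\mathrm ds$. -/
open MeasureTheory

theorem stmt2 {Ω : Type*} [MeasurableSpace Ω] (μ : Measure Ω) [IsProbabilityMeasure μ]
    (X Y : Ω → ℝ) (hXm : Measurable X) (hYm : Measurable Y)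
    (hX0 : ∀ ω, 0 ≤ X ω) (hY0 : ∀ ω, 0 ≤ Y ω) (hYint : Integrable Y μ)
    (hyp : ∀ x : ℝ, 0 < x →
      x * (μ {ω | x < X ω}).toReal ≤ ∫ ω in {ω | x ≤ X ω}, Y ω ∂μ) :
    ∀ t : ℝ, 0 < t →
      (μ {ω | 2 * t < X ω}).toReal ≤ ∫ s in Set.Ioi (1 : ℝ), (μ {ω | s * t < Y ω}).toReal := by
  intro t ht
  set g : ℝ → ℝ := fun y => (μ {ω | y < Y ω}).toReal with hg
  set Z : Ω → ℝ := fun ω => max (Y ω - t) 0 with hZdef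
  have hZint : Integrable Z μ := (hYint.sub (integrable_const t)).pos_part
  have hZnn : ∀ ω, 0 ≤ Z ω := fun ω => le_max_right _ _
  have hYleZ : ∀ ω, Y ω ≤ t + Z ω := by
    intro ω
    have : Y ω - t ≤ Z ω := le_max_left _ _
    linarith
  set P : ℝ := (μ {ω | 2 * t < X ω}).toReal with hP
  set C : ℝ := ∫ ω, Z ω ∂μ with hC
  -- Step A: target integral equals t⁻¹ * ∫ y in Ioi t, g y
  have hA : ∫ s in Set.Ioi (1 : ℝ), (μ {ω | s * t < Y ω}).toReal
      = t⁻¹ * ∫ y in Set.Ioi t, g y := by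
    have := integral_comp_mul_right_Ioi g 1 ht
    simpa [hg, smul_eq_mul] using this
  -- Step B: ∫ y in Ioi t, g y = C
  have hB : ∫ y in Set.Ioi t, g y = C := by
    have hlayer : C = ∫ u in Set.Ioi (0 : ℝ), (μ {ω | u < Z ω}).toReal :=
      hZint.integral_eq_integral_meas_lt (Filter.Eventually.of_forall hZnn)
    have hshift : ∫ u in Set.Ioi (0 : ℝ), g (u + t) = ∫ y in Set.Ioi t, g y := by
      have hmp : MeasurePreserving (fun u : ℝ => u + t) volume volume :=
        measurePreserving_add_right volume t
      have hemb : MeasurableEmbedding (fun u : ℝ => u + t) :=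
        (Homeomorph.addRight t).measurableEmbedding
      have hpre : (fun u : ℝ => u + t) ⁻¹' Set.Ioi t = Set.Ioi 0 := by
        ext u; simp [Set.mem_Ioi]
      rw [← hpre]
      exact hmp.setIntegral_preimage_emb hemb g (Set.Ioi t)
    have hcongr : ∫ u in Set.Ioi (0 : ℝ), (μ {ω | u < Z ω}).toReal
        = ∫ u in Set.Ioi (0 : ℝ), g (u + t) := by
      apply setIntegral_congr_fun measurableSet_Ioi
      intro u hu
      have : {ω | u < Z ω} = {ω | u + t < Y ω} := by
        ext ω
        simp only [Set.mem_setOf_eq, hZdef, lt_max_iff]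
        constructor
        · rintro (h | h)
          · linarith
          · exact absurd h (not_lt.mpr (le_of_lt hu))
        · intro h; left; linarith
      simp [hg, this]
    rw [hlayer, hcongr, hshift]
  -- Step C: main bound, t * P ≤ C
  have key : ∀ x : ℝ, 2 * t < x → x * (μ {ω | x < X ω}).toReal ≤ t * P + C := by
    intro x hx
    have hx0 : 0 < x := lt_trans (by linarith) hx
    refine le_trans (hyp x hx0) ?_
    have hsub : {ω | x ≤ X ω} ⊆ {ω | 2 * t < X ω} := fun ω hω =>
      lt_of_lt_of_le hx hω
    have hYres : IntegrableOn Y {ω | x ≤ X ω} μ := hYint.integrableOn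
    have hZres : IntegrableOn (fun ω => t + Z ω) {ω | x ≤ X ω} μ :=
      ((integrable_const t).add hZint).integrableOn
    have h1 : ∫ ω in {ω | x ≤ X ω}, Y ω ∂μ ≤ ∫ ω in {ω | x ≤ X ω}, (t + Z ω) ∂μ :=
      setIntegral_mono hYres hZres fun ω => hYleZ ω
    have hmeas : MeasurableSet {ω | x ≤ X ω} := hXm measurableSet_Ici
    have h2 : ∫ ω in {ω | x ≤ X ω}, (t + Z ω) ∂μ
        = t * (μ {ω | x ≤ X ω}).toReal + ∫ ω in {ω | x ≤ X ω}, Z ω ∂μ := by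
      rw [integral_add (integrable_const t).integrableOn hZint.integrableOn,
        setIntegral_const, smul_eq_mul, mul_comm]
      rfl
    have h3 : (μ {ω | x ≤ X ω}).toReal ≤ P :=
      ENNReal.toReal_mono (measure_ne_top μ _) (measure_mono hsub)
    have h4 : ∫ ω in {ω | x ≤ X ω}, Z ω ∂μ ≤ C :=
      setIntegral_le_integral hZint (Filter.Eventually.of_forall hZnn)
    calc ∫ ω in {ω | x ≤ X ω}, Y ω ∂μ
        ≤ t * (μ {ω | x ≤ X ω}).toReal + ∫ ω in {ω | x ≤ X ω}, Z ω ∂μ := by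
          rw [← h2]; exact h1
      _ ≤ t * P + C := by
          have := mul_le_mul_of_nonneg_left h3 ht.le
          linarith
  -- sequence x_n = 2t + 1/(n+1)
  set A : ℕ → Set Ω := fun n => {ω | 2 * t + 1 / (n + 1 : ℝ) < X ω} with hAdef
  have hAmono : Monotone A := by
    intro m n hmn ω hω
    have h1 : (1 : ℝ) / (n + 1) ≤ 1 / (m + 1) := by
      apply one_div_le_one_div_of_le (by positivity)
      exact_mod_cast by omega
    simp only [hAdef, Set.mem_setOf_eq] at hω ⊢
    linarith
  have hAunion : (⋃ n, A n) = {ω | 2 * t < X ω} := by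
    ext ω
    simp only [Set.mem_iUnion, hAdef, Set.mem_setOf_eq]
    constructor
    · rintro ⟨n, hn⟩
      have : (0 : ℝ) < 1 / (n + 1 : ℝ) := by positivity
      linarith
    · intro h
      obtain ⟨n, hn⟩ := exists_nat_one_div_lt (show (0 : ℝ) < X ω - 2 * t by linarith)
      exact ⟨n, by linarith⟩
  have hlim : Filter.Tendsto (fun n => (μ (A n)).toReal) Filter.atTop (nhds P) := by
    have h1 : Filter.Tendsto (fun n => μ (A n)) Filter.atTop (nhds (μ {ω | 2 * t < X ω})) := by
      rw [← hAunion]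
      exact tendsto_measure_iUnion_atTop hAmono
    exact (ENNReal.tendsto_toReal (measure_ne_top μ _)).comp h1
  have hineq : ∀ n : ℕ, 2 * t * (μ (A n)).toReal ≤ t * P + C := by
    intro n
    have hxgt : 2 * t < 2 * t + 1 / (n + 1 : ℝ) := by
      have : (0 : ℝ) < 1 / (n + 1 : ℝ) := by positivity
      linarith
    refine le_trans ?_ (key _ hxgt)
    apply mul_le_mul_of_nonneg_right hxgt.le ENNReal.toReal_nonneg
  have hfinal : 2 * t * P ≤ t * P + C := by
    refine le_of_tendsto (hlim.const_mul (2 * t)) ?_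
    filter_upwards with n using hineq n
  have htP : t * P ≤ C := by linarith
  rw [hA, hB, inv_mul_eq_div, le_div_iff₀ ht]
  linarith
end

section
/- Let $p\ge 1$ and $q\ge 0$. There exists a constant $c_{p,q}$ depending only on $p$ and $q$ such that for every non-negative random variable $X$, $\sum_{k=1}^{\infty} 2^{kp} k^q\, \mathbb{P}\{X > 2^k/\sqrt{k}\} \le c_{p,q}\, \mathbb{E}[X^p (\ln X)^{q+p/2}\, \mathbf 1\{X>1\}]$. -/
open MeasureTheory

lemma sqrt_le (k : ℕ) : Real.sqrt ((k:ℝ)+1) ≤ (2:ℝ) ^ (((k:ℝ)+1)/2) := by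
  have h1 : ((k:ℝ)+1) ≤ (2:ℝ) ^ ((k:ℝ)+1) := by
    have h2 : ((k+1 : ℕ) : ℝ) ≤ ((2^(k+1) : ℕ) : ℝ) := by exact_mod_cast (Nat.lt_two_pow_self (n := k+1)).le
    calc ((k:ℝ)+1) = ((k+1:ℕ):ℝ) := by push_cast; ring
      _ ≤ ((2^(k+1):ℕ):ℝ) := h2
      _ = (2:ℝ) ^ ((k:ℝ)+1) := by
          push_cast
          rw [show ((k:ℝ)+1) = ((k+1:ℕ):ℝ) by push_cast; ring, Real.rpow_natCast]
          
  calc Real.sqrt ((k:ℝ)+1) = ((k:ℝ)+1) ^ (1/2 : ℝ) := Real.sqrt_eq_rpow _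
    _ ≤ ((2:ℝ) ^ ((k:ℝ)+1)) ^ (1/2 : ℝ) :=
        Real.rpow_le_rpow (by positivity) h1 (by norm_num)
    _ = (2:ℝ) ^ (((k:ℝ)+1)/2) := by
        rw [← Real.rpow_mul (by norm_num)]; ring_nf

lemma aux_pt (p q : ℝ) (hp : 1 ≤ p) (hq : 0 ≤ q) (x : ℝ) :
    ∑' k : ℕ, (if (2:ℝ) ^ ((k:ℝ)+1) / Real.sqrt ((k:ℝ)+1) < x then
        ENNReal.ofReal ((2:ℝ) ^ (((k:ℝ)+1)*p) * ((k:ℝ)+1)^q) else 0)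
      ≤ ENNReal.ofReal (2 * (2 / Real.log 2) ^ (q + p/2)) *
        ENNReal.ofReal (if 1 < x then x ^ p * Real.log x ^ (q + p/2) else 0) := by
  set S : Set ℕ := {k | (2:ℝ) ^ ((k:ℝ)+1) / Real.sqrt ((k:ℝ)+1) < x} with hSdef
  by_cases hS : S.Nonempty
  · -- key facts about members of S
    have hsq : ∀ k : ℕ, (0:ℝ) < Real.sqrt ((k:ℝ)+1) := fun k => Real.sqrt_pos.2 (by positivity)
    have hmem : ∀ k ∈ S, (2:ℝ) ^ (((k:ℝ)+1)/2) < x := by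
      intro k hk
      have h1 : (2:ℝ) ^ (((k:ℝ)+1)/2) ≤ (2:ℝ) ^ ((k:ℝ)+1) / Real.sqrt ((k:ℝ)+1) := by
        rw [le_div_iff₀ (hsq k)]
        calc (2:ℝ) ^ (((k:ℝ)+1)/2) * Real.sqrt ((k:ℝ)+1)
            ≤ (2:ℝ) ^ (((k:ℝ)+1)/2) * (2:ℝ) ^ (((k:ℝ)+1)/2) := by
              exact mul_le_mul_of_nonneg_left (sqrt_le k) (by positivity)
          _ = (2:ℝ) ^ ((k:ℝ)+1) := by rw [← Real.rpow_add (by norm_num)]; ring_nf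
      exact lt_of_le_of_lt h1 hk
    -- x > 1
    have hx1 : (1:ℝ) < x := by
      obtain ⟨k, hk⟩ := hS
      have := hmem k hk
      have h2 : (1:ℝ) < (2:ℝ) ^ (((k:ℝ)+1)/2) :=
        Real.one_lt_rpow_iff_of_pos (by norm_num) |>.2 (Or.inl ⟨by norm_num, by positivity⟩)
      linarith
    have hlogx : (0:ℝ) < Real.log x := Real.log_pos hx1
    have hlog2 : (0:ℝ) < Real.log 2 := Real.log_pos (by norm_num)
    -- bound on members: (k:ℝ)+1 < 2 * log x / log 2
    have hbd : ∀ k ∈ S, ((k:ℝ)+1) < 2 * Real.log x / Real.log 2 := by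
      intro k hk
      have h1 := hmem k hk
      have h2 : (((k:ℝ)+1)/2) * Real.log 2 < Real.log x := by
        have := Real.log_lt_log (by positivity) h1
        rwa [Real.log_rpow (by norm_num)] at this
      rw [lt_div_iff₀ hlog2]; linarith
    -- S is finite and bounded
    have hbdd : BddAbove S := by
      refine ⟨⌈2 * Real.log x / Real.log 2⌉₊, fun k hk => ?_⟩
      have h := hbd k hk
      have : (k:ℝ) < 2 * Real.log x / Real.log 2 := by linarith
      exact (Nat.lt_ceil.2 this).le
    have hNmem : sSup S ∈ S := Nat.sSup_mem hS hbdd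
    set N := sSup S with hN
    have hle : ∀ k ∈ S, k ≤ N := fun k hk => le_csSup hbdd hk
    have hts : ∑' k : ℕ, (if (2:ℝ) ^ ((k:ℝ)+1) / Real.sqrt ((k:ℝ)+1) < x then
          ENNReal.ofReal ((2:ℝ) ^ (((k:ℝ)+1)*p) * ((k:ℝ)+1)^q) else 0)
        = ∑ k ∈ Finset.range (N+1), (if (2:ℝ) ^ ((k:ℝ)+1) / Real.sqrt ((k:ℝ)+1) < x then
          ENNReal.ofReal ((2:ℝ) ^ (((k:ℝ)+1)*p) * ((k:ℝ)+1)^q) else 0) :=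
      tsum_eq_sum (fun k hk => if_neg (fun h => hk (Finset.mem_range.2 (Nat.lt_succ_of_le (hle k h)))))
    rw [hts]
    set C : ℝ := (2:ℝ)^(((N:ℝ)+1)*(p-1)) * ((N:ℝ)+1)^q with hC
    have hC0 : 0 ≤ C := by positivity
    have hterm : ∀ k ∈ Finset.range (N+1),
        (if (2:ℝ) ^ ((k:ℝ)+1) / Real.sqrt ((k:ℝ)+1) < x then
          ENNReal.ofReal ((2:ℝ) ^ (((k:ℝ)+1)*p) * ((k:ℝ)+1)^q) else 0)
        ≤ ENNReal.ofReal ((2:ℝ)^((k:ℝ)+1) * C) := by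
      intro k hk
      have hkN : (k:ℝ) ≤ (N:ℝ) := by
        exact_mod_cast Nat.lt_succ_iff.1 (Finset.mem_range.1 hk)
      have h1 : (2:ℝ) ^ (((k:ℝ)+1)*p) * ((k:ℝ)+1)^q ≤ (2:ℝ)^((k:ℝ)+1) * C := by
        have e1 : (2:ℝ) ^ (((k:ℝ)+1)*p) = (2:ℝ)^((k:ℝ)+1) * (2:ℝ)^(((k:ℝ)+1)*(p-1)) := by
          rw [← Real.rpow_add (by norm_num)]; ring_nf
        have e2 : (2:ℝ)^(((k:ℝ)+1)*(p-1)) ≤ (2:ℝ)^(((N:ℝ)+1)*(p-1)) := by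
          apply Real.rpow_le_rpow_left_iff (by norm_num : (1:ℝ) < 2) |>.2
          exact mul_le_mul_of_nonneg_right (by linarith) (by linarith)
        have e3 : ((k:ℝ)+1)^q ≤ ((N:ℝ)+1)^q :=
          Real.rpow_le_rpow (by positivity) (by linarith) hq
        calc (2:ℝ) ^ (((k:ℝ)+1)*p) * ((k:ℝ)+1)^q
            = (2:ℝ)^((k:ℝ)+1) * ((2:ℝ)^(((k:ℝ)+1)*(p-1)) * ((k:ℝ)+1)^q) := by rw [e1]; ring
          _ ≤ (2:ℝ)^((k:ℝ)+1) * ((2:ℝ)^(((N:ℝ)+1)*(p-1)) * ((N:ℝ)+1)^q) := by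
              apply mul_le_mul_of_nonneg_left _ (by positivity)
              exact mul_le_mul e2 e3 (by positivity) (by positivity)
          _ = (2:ℝ)^((k:ℝ)+1) * C := rfl
      split
      · exact ENNReal.ofReal_le_ofReal h1
      · exact zero_le
    refine le_trans (Finset.sum_le_sum hterm) ?_
    rw [← ENNReal.ofReal_sum_of_nonneg (fun k _ => by positivity)]
    have hgeo : ∑ k ∈ Finset.range (N+1), (2:ℝ)^((k:ℝ)+1) * C ≤ 2 * (2:ℝ)^((N:ℝ)+1) * C := by
      rw [← Finset.sum_mul]
      apply mul_le_mul_of_nonneg_right _ hC0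
      have e4 : ∀ k : ℕ, (2:ℝ)^((k:ℝ)+1) = 2 * (2:ℝ)^(k:ℕ) := by
        intro k
        rw [show ((k:ℝ)+1) = ((k+1:ℕ):ℝ) by push_cast; ring, Real.rpow_natCast]
        ring
      simp only [e4]
      rw [← Finset.mul_sum]
      have h4 : ((2:ℝ)^(N+1) - 1)/(2-1) = 2^(N+1) - 1 := by norm_num
      rw [geom_sum_eq (by norm_num : (2:ℝ) ≠ 1), h4]
      have h3 : (2:ℝ)^(N+1) = 2 * 2^N := by ring
      linarith [h3]
    -- the key real inequality for the top term
    have hNx : (2:ℝ)^((N:ℝ)+1) < x * Real.sqrt ((N:ℝ)+1) := by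
      have := hNmem
      rw [hSdef] at this
      exact (div_lt_iff₀ (hsq N)).1 this
    have key : 2 * (2:ℝ)^((N:ℝ)+1) * C
        ≤ (2 * (2/Real.log 2)^(q+p/2)) * (x^p * Real.log x^(q+p/2)) := by
      have hx0 : (0:ℝ) ≤ x := by linarith
      have e5 : 2 * (2:ℝ)^((N:ℝ)+1) * C = 2 * ((2:ℝ)^(((N:ℝ)+1)*p) * ((N:ℝ)+1)^q) := by
        have h5 : (2:ℝ)^(((N:ℝ)+1)*p) = (2:ℝ)^((N:ℝ)+1) * (2:ℝ)^(((N:ℝ)+1)*(p-1)) := by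
          rw [← Real.rpow_add (by norm_num)]; ring_nf
        rw [hC, h5]; ring
      have e6 : (2:ℝ)^(((N:ℝ)+1)*p) ≤ x^p * ((N:ℝ)+1)^(p/2) := by
        calc (2:ℝ)^(((N:ℝ)+1)*p) = ((2:ℝ)^((N:ℝ)+1))^p := by
              rw [← Real.rpow_mul (by norm_num : (0:ℝ) ≤ 2)]
          _ ≤ (x * Real.sqrt ((N:ℝ)+1))^p :=
              Real.rpow_le_rpow (by positivity) hNx.le (by linarith)
          _ = x^p * (Real.sqrt ((N:ℝ)+1))^p :=
              Real.mul_rpow hx0 (Real.sqrt_nonneg _)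
          _ = x^p * ((N:ℝ)+1)^(p/2) := by
              rw [Real.sqrt_eq_rpow, ← Real.rpow_mul (by positivity)]
              ring_nf
      have e7 : ((N:ℝ)+1)^(p/2) * ((N:ℝ)+1)^q = ((N:ℝ)+1)^(q+p/2) := by
        rw [← Real.rpow_add (by positivity)]; ring_nf
      have e8 : ((N:ℝ)+1)^(q+p/2) ≤ ((2/Real.log 2) * Real.log x)^(q+p/2) := by
        apply Real.rpow_le_rpow (by positivity) _ (by linarith)
        have := hbd N hNmem
        calc ((N:ℝ)+1) ≤ 2 * Real.log x / Real.log 2 := this.le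
          _ = (2/Real.log 2) * Real.log x := by ring
      have e9 : ((2/Real.log 2) * Real.log x)^(q+p/2)
          = (2/Real.log 2)^(q+p/2) * Real.log x^(q+p/2) :=
        Real.mul_rpow (by positivity) hlogx.le
      calc 2 * (2:ℝ)^((N:ℝ)+1) * C = 2 * ((2:ℝ)^(((N:ℝ)+1)*p) * ((N:ℝ)+1)^q) := e5
        _ ≤ 2 * (x^p * ((N:ℝ)+1)^(p/2) * ((N:ℝ)+1)^q) := by
            apply mul_le_mul_of_nonneg_left _ (by norm_num)
            exact mul_le_mul_of_nonneg_right e6 (by positivity)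
        _ = 2 * (x^p * ((N:ℝ)+1)^(q+p/2)) := by rw [mul_assoc (x^p), e7]
        _ ≤ 2 * (x^p * ((2/Real.log 2) * Real.log x)^(q+p/2)) := by
            apply mul_le_mul_of_nonneg_left _ (by norm_num)
            exact mul_le_mul_of_nonneg_left e8 (by positivity)
        _ = (2 * (2/Real.log 2)^(q+p/2)) * (x^p * Real.log x^(q+p/2)) := by
            rw [e9]; ring
    rw [if_pos hx1, ← ENNReal.ofReal_mul (by positivity)]
    exact ENNReal.ofReal_le_ofReal (le_trans hgeo key)
  · -- empty case
    have h0 : ∀ k : ℕ, (if (2:ℝ) ^ ((k:ℝ)+1) / Real.sqrt ((k:ℝ)+1) < x then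
        ENNReal.ofReal ((2:ℝ) ^ (((k:ℝ)+1)*p) * ((k:ℝ)+1)^q) else 0) = 0 := by
      intro k
      rw [if_neg]
      exact fun h => hS ⟨k, h⟩
    simp only [h0, tsum_zero]
    exact zero_le

theorem stmt3 (p q : ℝ) (hp : 1 ≤ p) (hq : 0 ≤ q) :
    ∃ c > (0 : ℝ),
      ∀ (Ω : Type) [MeasurableSpace Ω] (μ : Measure Ω) [IsProbabilityMeasure μ]
        (X : Ω → ℝ), Measurable X → (∀ ω, 0 ≤ X ω) →
        ∑' k : ℕ, ENNReal.ofReal ((2 : ℝ) ^ (((k : ℝ) + 1) * p) * ((k : ℝ) + 1) ^ q) *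
            μ {ω | (2 : ℝ) ^ ((k : ℝ) + 1) / Real.sqrt ((k : ℝ) + 1) < X ω}
          ≤ ENNReal.ofReal c *
            ∫⁻ ω, ENNReal.ofReal
              (if 1 < X ω then X ω ^ p * Real.log (X ω) ^ (q + p / 2) else 0) ∂μ := by
  refine ⟨2 * (2 / Real.log 2) ^ (q + p/2), by
    have := Real.log_pos (by norm_num : (1:ℝ) < 2)
    positivity, ?_⟩
  intro Ω _ μ _ X hX hX0
  have hmeas : ∀ k : ℕ, MeasurableSet {ω | (2:ℝ)^((k:ℝ)+1)/Real.sqrt ((k:ℝ)+1) < X ω} :=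
    fun k => measurableSet_lt measurable_const hX
  calc ∑' k : ℕ, ENNReal.ofReal ((2 : ℝ) ^ (((k : ℝ) + 1) * p) * ((k : ℝ) + 1) ^ q) *
          μ {ω | (2 : ℝ) ^ ((k : ℝ) + 1) / Real.sqrt ((k : ℝ) + 1) < X ω}
      = ∑' k : ℕ, ∫⁻ ω, ({ω | (2:ℝ)^((k:ℝ)+1)/Real.sqrt ((k:ℝ)+1) < X ω}).indicator
          (fun _ => ENNReal.ofReal ((2 : ℝ) ^ (((k : ℝ) + 1) * p) * ((k : ℝ) + 1) ^ q)) ω ∂μ := by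
        congr 1; funext k
        rw [lintegral_indicator_const (hmeas k)]
    _ = ∫⁻ ω, ∑' k : ℕ, ({ω | (2:ℝ)^((k:ℝ)+1)/Real.sqrt ((k:ℝ)+1) < X ω}).indicator
          (fun _ => ENNReal.ofReal ((2 : ℝ) ^ (((k : ℝ) + 1) * p) * ((k : ℝ) + 1) ^ q)) ω ∂μ :=
        (lintegral_tsum fun k => (measurable_const.indicator (hmeas k)).aemeasurable).symm
    _ ≤ ∫⁻ ω, ENNReal.ofReal (2 * (2 / Real.log 2) ^ (q + p/2)) *
          ENNReal.ofReal (if 1 < X ω then X ω ^ p * Real.log (X ω) ^ (q + p / 2) else 0) ∂μ := by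
        apply lintegral_mono
        intro ω
        have h := aux_pt p q hp hq (X ω)
        simpa [Set.indicator_apply] using h
    _ = ENNReal.ofReal (2 * (2 / Real.log 2) ^ (q + p/2)) *
          ∫⁻ ω, ENNReal.ofReal
            (if 1 < X ω then X ω ^ p * Real.log (X ω) ^ (q + p / 2) else 0) ∂μ :=
        lintegral_const_mul' _ _ ENNReal.ofReal_ne_top
end

section
/- Let $(d_j)_{j\ge 1}$ be a sequence of square-integrable martingale differences with respect to a filtration $(\mathcal F_j)_{j\ge 0}$. Then for all positive real numbers $x$ and $y$, $\mathbb{P}\big(\{|\sum_{j=1}^n d_j| > x\} \cap \{\sum_{j=1}^n (d_j^2 + \mathbb{E}[d_j^2\mid\mathcal F_{j-1}]) \le y\}\big) \le 2\exp(-x^2/(2y))$. -/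
open MeasureTheory

private lemma gderiv5 (u : ℝ) : HasDerivAt (fun u : ℝ => (1+u+u^2/2)*Real.exp (u^2/2 - u))
    ((u + u^2/2 + u^3/2) * Real.exp (u^2/2 - u)) u := by
  have h1 : HasDerivAt (fun u : ℝ => 1+u+u^2/2) (1+u) u := by
    have := ((hasDerivAt_id u).const_add 1).add ((hasDerivAt_pow 2 u).div_const 2)
    refine this.congr_deriv ?_; push_cast; ring
  have h2 : HasDerivAt (fun u : ℝ => u^2/2 - u) (u - 1) u := by
    have := ((hasDerivAt_pow 2 u).div_const 2).sub (hasDerivAt_id u)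
    refine this.congr_deriv ?_; push_cast; ring
  have := h1.mul h2.exp
  refine this.congr_deriv ?_; ring

private lemma key_ineq5 (u : ℝ) : Real.exp (u - u^2/2) ≤ 1 + u + u^2/2 := by
  set g : ℝ → ℝ := fun u => (1+u+u^2/2)*Real.exp (u^2/2 - u) with hg
  have hcont : Continuous g := by fun_prop
  have hfactor : ∀ v : ℝ, v + v^2/2 + v^3/2 = v * (1 + v/2 + v^2/2) := fun v => by ring
  have hquad : ∀ v : ℝ, (0:ℝ) < 1 + v/2 + v^2/2 := by
    intro v; nlinarith [sq_nonneg (v+1), sq_nonneg v]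
  have h1le : 1 ≤ g u := by
    have hg0 : g 0 = 1 := by simp [hg]
    rcases le_total 0 u with h | h
    · have mono : MonotoneOn g (Set.Ici 0) := by
        apply monotoneOn_of_deriv_nonneg (convex_Ici 0) hcont.continuousOn
          (fun v _ => (gderiv5 v).differentiableAt.differentiableWithinAt)
        intro v hv
        rw [interior_Ici, Set.mem_Ioi] at hv
        rw [(gderiv5 v).deriv, hfactor]
        exact mul_nonneg (mul_nonneg hv.le (hquad v).le) (Real.exp_pos _).le
      calc 1 = g 0 := hg0.symm
        _ ≤ g u := mono Set.self_mem_Ici h h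
    · have anti : AntitoneOn g (Set.Iic 0) := by
        apply antitoneOn_of_deriv_nonpos (convex_Iic 0) hcont.continuousOn
          (fun v _ => (gderiv5 v).differentiableAt.differentiableWithinAt)
        intro v hv
        rw [interior_Iic, Set.mem_Iio] at hv
        rw [(gderiv5 v).deriv, hfactor]
        exact mul_nonpos_of_nonpos_of_nonneg
          (mul_nonpos_of_nonpos_of_nonneg hv.le (hquad v).le) (Real.exp_pos _).le
      calc 1 = g 0 := hg0.symm
        _ ≤ g u := anti (Set.mem_Iic.2 h) Set.self_mem_Iic h
  have : Real.exp (u - u^2/2) * 1 ≤ Real.exp (u - u^2/2) * g u :=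
    mul_le_mul_of_nonneg_left h1le (Real.exp_pos _).le
  rw [hg] at this
  simp only [mul_one] at this
  calc Real.exp (u - u^2/2) ≤ Real.exp (u - u^2/2) * ((1+u+u^2/2) * Real.exp (u^2/2-u)) := this
    _ = (1+u+u^2/2) * Real.exp (u - u^2/2 + (u^2/2 - u)) := by rw [Real.exp_add]; ring
    _ = 1 + u + u^2/2 := by norm_num

private lemma one_sided5 {Ω : Type*} [m0 : MeasurableSpace Ω] (μ : Measure Ω)
    [IsProbabilityMeasure μ]
    (ℱ : ℕ → MeasurableSpace Ω) (hle : ∀ j, ℱ j ≤ m0) (hmono : Monotone ℱ)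
    (d : ℕ → Ω → ℝ)
    (hmeas : ∀ j, 1 ≤ j → StronglyMeasurable[ℱ j] (d j))
    (hL2 : ∀ j, 1 ≤ j → MemLp (d j) 2 μ)
    (hmart : ∀ j, 1 ≤ j → μ[d j | ℱ (j - 1)] =ᵐ[μ] 0)
    (n : ℕ) (x y : ℝ) (hx : 0 < x) (hy : 0 < y) :
    (μ ({ω | x < ∑ j ∈ Finset.Icc 1 n, d j ω} ∩
        {ω | ∑ j ∈ Finset.Icc 1 n,
          ((d j ω) ^ 2 + (μ[fun ω' => (d j ω') ^ 2 | ℱ (j - 1)]) ω) ≤ y})).toReal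
      ≤ Real.exp (-x ^ 2 / (2 * y)) := by
  set l : ℝ := x / y with hl
  have hlpos : 0 < l := div_pos hx hy
  set q : ℕ → Ω → ℝ := fun j => μ[fun ω' => (d j ω') ^ 2 | ℱ (j - 1)] with hqdef
  set W : ℕ → Ω → ℝ := fun k ω =>
    Real.exp (∑ j ∈ Finset.Icc 1 k,
      (l * d j ω - l ^ 2 / 2 * d j ω ^ 2 - l ^ 2 / 2 * q j ω)) with hWdef
  have hq_sm : ∀ j, StronglyMeasurable[ℱ (j - 1)] (q j) := fun j => stronglyMeasurable_condExp
  have hq_nonneg : ∀ᵐ ω ∂μ, ∀ j, 0 ≤ q j ω :=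
    ae_all_iff.2 fun j => condExp_nonneg (ae_of_all _ fun ω => sq_nonneg _)
  have hd_int : ∀ j, 1 ≤ j → Integrable (d j) μ := fun j hj => (hL2 j hj).integrable one_le_two
  have hd2_int : ∀ j, 1 ≤ j → Integrable (fun ω => d j ω ^ 2) μ :=
    fun j hj => (hL2 j hj).integrable_sq
  have hsq_sm : ∀ (m : MeasurableSpace Ω) (f : Ω → ℝ), StronglyMeasurable[m] f →
      StronglyMeasurable[m] (fun ω => f ω ^ 2) := fun m f hf => by
    simpa only [pow_two] using hf.fun_mul hf
  have hW_pos : ∀ k ω, 0 < W k ω := fun k ω => by rw [hWdef]; exact Real.exp_pos _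
  have hW_sm : ∀ k, StronglyMeasurable[ℱ k] (W k) := by
    intro k
    rw [hWdef]
    apply Real.continuous_exp.comp_stronglyMeasurable
    apply Finset.stronglyMeasurable_fun_sum
    intro j hj
    rw [Finset.mem_Icc] at hj
    have hdj : StronglyMeasurable[ℱ k] (d j) := (hmeas j hj.1).mono (hmono hj.2)
    have hqj : StronglyMeasurable[ℱ k] (q j) :=
      (hq_sm j).mono (hmono (le_trans (Nat.sub_le j 1) hj.2))
    exact ((hdj.const_mul l).sub ((hsq_sm _ _ hdj).const_mul (l^2/2))).sub (hqj.const_mul (l^2/2))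
  have hW_bdd : ∀ k, ∀ᵐ ω ∂μ, W k ω ≤ Real.exp (k * (1/2)) := by
    intro k
    filter_upwards [hq_nonneg] with ω hω
    rw [hWdef]
    apply Real.exp_le_exp.2
    calc ∑ j ∈ Finset.Icc 1 k, (l * d j ω - l^2/2 * d j ω^2 - l^2/2 * q j ω)
        ≤ ∑ _j ∈ Finset.Icc 1 k, (1/2 : ℝ) := by
          apply Finset.sum_le_sum
          intro j _
          have h1 := hω j
          nlinarith [sq_nonneg (l * d j ω - 1), sq_nonneg l,
            mul_nonneg (mul_nonneg (sq_nonneg l) (by norm_num : (0:ℝ) ≤ 1/2)) h1]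
      _ = k * (1/2) := by
          rw [Finset.sum_const, Nat.card_Icc, nsmul_eq_mul]
          norm_num
  have hW_int : ∀ k, Integrable (W k) μ := by
    intro k
    refine Integrable.mono' (integrable_const (Real.exp (k * (1/2))))
      (((hW_sm k).mono (hle k)).aestronglyMeasurable) ?_
    filter_upwards [hW_bdd k] with ω hω
    rwa [Real.norm_eq_abs, abs_of_pos (hW_pos k ω)]
  have hind : ∀ k, ∫ ω, W k ω ∂μ ≤ 1 := by
    intro k
    induction k with
    | zero =>
      have h0 : W 0 = fun _ => 1 := by
        funext ω; rw [hWdef]; simp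
      rw [h0]; simp
    | succ k ih =>
      have hk1 : 1 ≤ k + 1 := Nat.le_add_left 1 k
      set F : Ω → ℝ := fun ω => W k ω * Real.exp (-(l ^ 2 / 2 * q (k + 1) ω)) with hFdef
      set G : Ω → ℝ := fun ω =>
        Real.exp (l * d (k + 1) ω - l ^ 2 / 2 * d (k + 1) ω ^ 2) with hGdef
      have hWsucc : W (k + 1) = F * G := by
        funext ω
        simp only [hWdef, hFdef, hGdef, Pi.mul_apply]
        rw [Finset.sum_Icc_succ_top hk1, ← Real.exp_add, ← Real.exp_add]
        congr 1; ring
      have hd1 : StronglyMeasurable[ℱ (k+1)] (d (k+1)) := hmeas _ hk1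
      have hq1_sm : StronglyMeasurable[ℱ k] (q (k + 1)) := hq_sm (k+1)
      have hF_sm : StronglyMeasurable[ℱ k] F := by
        rw [hFdef]
        exact (hW_sm k).mul
          (Real.continuous_exp.comp_stronglyMeasurable (hq1_sm.const_mul (l^2/2)).neg)
      have hG_bdd : ∀ ω, G ω ≤ Real.exp (1/2) := by
        intro ω
        rw [hGdef]
        apply Real.exp_le_exp.2
        nlinarith [sq_nonneg (l * d (k+1) ω - 1)]
      have hG_pos : ∀ ω, 0 < G ω := fun ω => by rw [hGdef]; exact Real.exp_pos _
      have hG_int : Integrable G μ := by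
        refine Integrable.mono' (integrable_const (Real.exp (1/2)))
          ?_ (ae_of_all _ fun ω => ?_)
        · rw [hGdef]
          exact (Real.continuous_exp.comp_stronglyMeasurable
            (((hd1.mono (hle _)).const_mul l).sub
              ((hsq_sm _ _ (hd1.mono (hle _))).const_mul (l^2/2)))).aestronglyMeasurable
        · rw [Real.norm_eq_abs, abs_of_pos (hG_pos ω)]; exact hG_bdd ω
      have hFG_int : Integrable (F * G) μ := hWsucc ▸ hW_int (k+1)
      have hpull : μ[F * G | ℱ k] =ᵐ[μ] F * μ[G | ℱ k] :=
        condExp_mul_of_stronglyMeasurable_left hF_sm hFG_int hG_int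
      -- bound the conditional expectation of G
      set R : Ω → ℝ := (fun _ => (1:ℝ)) +
        (l • d (k+1) + (l^2/2) • fun ω => d (k+1) ω ^ 2) with hRdef
      have hRd_int : Integrable (l • d (k+1)) μ := (hd_int _ hk1).smul l
      have hRd2_int : Integrable ((l^2/2) • fun ω => d (k+1) ω ^ 2) μ :=
        (hd2_int _ hk1).smul (l^2/2)
      have hR_int : Integrable R μ := (integrable_const 1).add (hRd_int.add hRd2_int)
      have hGR : G ≤ᵐ[μ] R := by
        apply ae_of_all
        intro ω
        rw [hGdef, hRdef]
        simp only [Pi.add_apply, Pi.smul_apply, smul_eq_mul]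
        have hkey := key_ineq5 (l * d (k+1) ω)
        have heq : l * d (k+1) ω - l^2/2 * d (k+1) ω^2
            = l * d (k+1) ω - (l * d (k+1) ω)^2/2 := by ring
        rw [heq]
        nlinarith [hkey]
      have hcond_le : μ[G | ℱ k] ≤ᵐ[μ] μ[R | ℱ k] := condExp_mono hG_int hR_int hGR
      have hq1 : q (k+1) = μ[fun ω' => d (k+1) ω' ^ 2 | ℱ k] := rfl
      have hcondR : μ[R | ℱ k] =ᵐ[μ] fun ω => 1 + l^2/2 * q (k+1) ω := by
        have h1 := condExp_add (μ := μ) (m := ℱ k) (integrable_const (1:ℝ))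
          (hRd_int.add hRd2_int)
        have h2 := condExp_add (μ := μ) (m := ℱ k) hRd_int hRd2_int
        have h3 := condExp_smul (μ := μ) (m := ℱ k) l (d (k+1))
        have h4 := condExp_smul (μ := μ) (m := ℱ k) (l^2/2) (fun ω => d (k+1) ω ^ 2)
        have h5 : μ[d (k+1) | ℱ k] =ᵐ[μ] 0 := hmart (k+1) hk1
        rw [hRdef]
        calc μ[(fun _ => (1:ℝ)) + (l • d (k+1) + (l^2/2) • fun ω => d (k+1) ω ^ 2) | ℱ k]
            =ᵐ[μ] μ[fun _ => (1:ℝ) | ℱ k]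
              + μ[l • d (k+1) + (l^2/2) • fun ω => d (k+1) ω ^ 2 | ℱ k] := h1
          _ =ᵐ[μ] fun ω => 1 + l^2/2 * q (k+1) ω := by
              rw [condExp_const (hle k)]
              filter_upwards [h2, h3, h4, h5] with ω e2 e3 e4 e5
              simp only [Pi.add_apply, Pi.smul_apply, smul_eq_mul, Pi.zero_apply] at *
              rw [e2, e3, e4, e5, hq1]
              ring
      have hmain : F * μ[G | ℱ k] ≤ᵐ[μ] W k := by
        filter_upwards [hcond_le, hcondR] with ω e1 e2
        have hF_nonneg : 0 ≤ F ω := by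
          rw [hFdef]; exact mul_nonneg (hW_pos k ω).le (Real.exp_pos _).le
        have hexp1 : Real.exp (-(l^2/2 * q (k+1) ω)) * (1 + l^2/2 * q (k+1) ω) ≤ 1 := by
          set a := l^2/2 * q (k+1) ω
          have h1a : 1 + a ≤ Real.exp a := by linarith [Real.add_one_le_exp a]
          calc Real.exp (-a) * (1+a) ≤ Real.exp (-a) * Real.exp a :=
                mul_le_mul_of_nonneg_left h1a (Real.exp_pos _).le
            _ = 1 := by rw [← Real.exp_add]; simp
        have e2' : (μ[R | ℱ k]) ω = 1 + l^2/2 * q (k+1) ω := e2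
        calc (F * μ[G | ℱ k]) ω = F ω * (μ[G | ℱ k]) ω := rfl
          _ ≤ F ω * (1 + l^2/2 * q (k+1) ω) :=
              mul_le_mul_of_nonneg_left (le_trans e1 (le_of_eq e2')) hF_nonneg
          _ = W k ω * (Real.exp (-(l^2/2 * q (k+1) ω)) * (1 + l^2/2 * q (k+1) ω)) := by
              rw [hFdef]; ring
          _ ≤ W k ω * 1 := mul_le_mul_of_nonneg_left hexp1 (hW_pos k ω).le
          _ = W k ω := mul_one _
      have hWc : μ[W (k+1) | ℱ k] ≤ᵐ[μ] W k := by
        rw [hWsucc]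
        exact hpull.trans_le hmain
      calc ∫ ω, W (k+1) ω ∂μ = ∫ ω, (μ[W (k+1) | ℱ k]) ω ∂μ :=
            (integral_condExp (hle k)).symm
        _ ≤ ∫ ω, W k ω ∂μ := integral_mono_ae integrable_condExp (hW_int k) hWc
        _ ≤ 1 := ih
  -- Markov step
  set c : ℝ := Real.exp (x^2/(2*y)) with hc
  have hcpos : 0 < c := Real.exp_pos _
  have hsubset : ({ω | x < ∑ j ∈ Finset.Icc 1 n, d j ω} ∩
      {ω | ∑ j ∈ Finset.Icc 1 n, ((d j ω) ^ 2 + q j ω) ≤ y}) ⊆ {ω | c ≤ W n ω} := by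
    rintro ω ⟨h1, h2⟩
    simp only [Set.mem_setOf_eq] at h1 h2 ⊢
    rw [hWdef, hc]
    apply Real.exp_le_exp.2
    have hsum : ∑ j ∈ Finset.Icc 1 n, (l * d j ω - l^2/2 * d j ω^2 - l^2/2 * q j ω)
        = l * (∑ j ∈ Finset.Icc 1 n, d j ω)
          - l^2/2 * (∑ j ∈ Finset.Icc 1 n, (d j ω^2 + q j ω)) := by
      rw [Finset.mul_sum, Finset.mul_sum, ← Finset.sum_sub_distrib]
      exact Finset.sum_congr rfl fun j _ => by ring
    rw [hsum]
    have hval : l * x - l^2/2 * y = x^2/(2*y) := by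
      rw [hl]; field_simp; ring
    have h3 : l * x ≤ l * (∑ j ∈ Finset.Icc 1 n, d j ω) :=
      mul_le_mul_of_nonneg_left h1.le hlpos.le
    have h4 : l^2/2 * (∑ j ∈ Finset.Icc 1 n, (d j ω^2 + q j ω)) ≤ l^2/2 * y :=
      mul_le_mul_of_nonneg_left h2 (by positivity)
    linarith
  have hmarkov := mul_meas_ge_le_integral_of_nonneg
    (ae_of_all μ fun ω => (hW_pos n ω).le) (hW_int n) c
  have h8 : (μ ({ω | x < ∑ j ∈ Finset.Icc 1 n, d j ω} ∩
      {ω | ∑ j ∈ Finset.Icc 1 n, ((d j ω) ^ 2 + q j ω) ≤ y})).toReal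
      ≤ (μ {ω | c ≤ W n ω}).toReal :=
    ENNReal.toReal_mono (measure_ne_top μ _) (measure_mono hsubset)
  have h9 : (μ {ω | c ≤ W n ω}).toReal ≤ 1 / c := by
    rw [le_div_iff₀ hcpos]
    calc (μ {ω | c ≤ W n ω}).toReal * c = c * (μ {ω | c ≤ W n ω}).toReal := mul_comm _ _
      _ ≤ ∫ ω, W n ω ∂μ := hmarkov
      _ ≤ 1 := hind n
  have h10 : (1:ℝ) / c = Real.exp (-x ^ 2 / (2 * y)) := by
    rw [hc, one_div, ← Real.exp_neg, neg_div]
  linarith [h8.trans h9, le_of_eq h10]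

theorem stmt5 {Ω : Type*} [m0 : MeasurableSpace Ω] (μ : Measure Ω) [IsProbabilityMeasure μ]
    (ℱ : ℕ → MeasurableSpace Ω) (hle : ∀ j, ℱ j ≤ m0) (hmono : Monotone ℱ)
    (d : ℕ → Ω → ℝ)
    (hmeas : ∀ j, 1 ≤ j → StronglyMeasurable[ℱ j] (d j))
    (hL2 : ∀ j, 1 ≤ j → MemLp (d j) 2 μ)
    (hmart : ∀ j, 1 ≤ j → μ[d j | ℱ (j - 1)] =ᵐ[μ] 0)
    (n : ℕ) (hn : 1 ≤ n) (x y : ℝ) (hx : 0 < x) (hy : 0 < y) :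
    (μ ({ω | x < |∑ j ∈ Finset.Icc 1 n, d j ω|} ∩
        {ω | ∑ j ∈ Finset.Icc 1 n,
          ((d j ω) ^ 2 + (μ[fun ω' => (d j ω') ^ 2 | ℱ (j - 1)]) ω) ≤ y})).toReal
      ≤ 2 * Real.exp (-x ^ 2 / (2 * y)) := by
  set C : Set Ω := {ω | ∑ j ∈ Finset.Icc 1 n,
    ((d j ω) ^ 2 + (μ[fun ω' => (d j ω') ^ 2 | ℱ (j - 1)]) ω) ≤ y} with hC
  have hpos := one_sided5 μ ℱ hle hmono d hmeas hL2 hmart n x y hx hy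
  have hneg : (μ ({ω | x < -∑ j ∈ Finset.Icc 1 n, d j ω} ∩ C)).toReal
      ≤ Real.exp (-x ^ 2 / (2 * y)) := by
    have hmeas' : ∀ j, 1 ≤ j → StronglyMeasurable[ℱ j] (fun ω => -(d j ω)) :=
      fun j hj => (hmeas j hj).neg
    have hL2' : ∀ j, 1 ≤ j → MemLp (fun ω => -(d j ω)) 2 μ := fun j hj => (hL2 j hj).neg
    have hmart' : ∀ j, 1 ≤ j → μ[(fun ω => -(d j ω)) | ℱ (j - 1)] =ᵐ[μ] 0 := by
      intro j hj
      have h1 : μ[(fun ω => -(d j ω)) | ℱ (j - 1)] =ᵐ[μ] -μ[d j | ℱ (j - 1)] :=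
        condExp_neg (d j) (ℱ (j - 1))
      filter_upwards [h1, hmart j hj] with ω e1 e2
      simp only [Pi.neg_apply, Pi.zero_apply] at *
      rw [e1, e2, neg_zero]
    have h2 := one_sided5 μ ℱ hle hmono (fun j ω => -(d j ω)) hmeas' hL2' hmart' n x y hx hy
    simp only [neg_sq, Finset.sum_neg_distrib] at h2
    exact h2
  have hsub : ({ω | x < |∑ j ∈ Finset.Icc 1 n, d j ω|} ∩ C) ⊆
      (({ω | x < ∑ j ∈ Finset.Icc 1 n, d j ω} ∩ C) ∪
       ({ω | x < -∑ j ∈ Finset.Icc 1 n, d j ω} ∩ C)) := by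
    rintro ω ⟨h1, h2⟩
    simp only [Set.mem_setOf_eq] at h1
    rcases lt_abs.1 h1 with h | h
    · exact Or.inl ⟨h, h2⟩
    · exact Or.inr ⟨h, h2⟩
  calc (μ ({ω | x < |∑ j ∈ Finset.Icc 1 n, d j ω|} ∩ C)).toReal
      ≤ ((μ ({ω | x < ∑ j ∈ Finset.Icc 1 n, d j ω} ∩ C))
        + (μ ({ω | x < -∑ j ∈ Finset.Icc 1 n, d j ω} ∩ C))).toReal := by
        refine ENNReal.toReal_mono ?_ ((measure_mono hsub).trans (measure_union_le _ _))
        exact ENNReal.add_ne_top.2 ⟨measure_ne_top μ _, measure_ne_top μ _⟩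
    _ = (μ ({ω | x < ∑ j ∈ Finset.Icc 1 n, d j ω} ∩ C)).toReal
        + (μ ({ω | x < -∑ j ∈ Finset.Icc 1 n, d j ω} ∩ C)).toReal :=
        ENNReal.toReal_add (measure_ne_top μ _) (measure_ne_top μ _)
    _ ≤ Real.exp (-x ^ 2 / (2 * y)) + Real.exp (-x ^ 2 / (2 * y)) := add_le_add hpos hneg
    _ = 2 * Real.exp (-x ^ 2 / (2 * y)) := by ring
end

section
/- Let $r\ge 0$. There exists a constant $c_r$ depending only on $r$ such that for every non-negative random variable $X$, $\|X^{1/2}\|_{2,r} \le c_r\, \|X\|_{1,r}^{1/2}$, where $\|\cdot\|_{p,r}$ denotes the Orlicz norm associated to $\varphi_{p,r}(x)=x^p(1+\log(1+x))^r$. -/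
open MeasureTheory

/-- Orlicz (Luxemburg) norm associated to `φ_{p,r}(x) = x^p (1 + log(1+x))^r`. -/
noncomputable def orliczNorm {Ω : Type*} [MeasurableSpace Ω] (μ : Measure Ω)
    (p r : ℝ) (X : Ω → ℝ) : ℝ :=
  sInf {l : ℝ | 0 < l ∧
    ∫⁻ ω, ENNReal.ofReal
      ((|X ω| / l) ^ p * (1 + Real.log (1 + |X ω| / l)) ^ r) ∂μ ≤ 1}

/-- Pointwise comparison: `φ_{2,r}(√x / (c √λ)) ≤ φ_{1,r}(x/λ)` where
`c = (1+log 2)^(r/2)`. -/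
lemma claimA (r : ℝ) (hr : 0 ≤ r) (x l0 : ℝ) (hx : 0 ≤ x) (hl : 0 < l0) :
    (Real.sqrt x / ((1 + Real.log 2) ^ (r/2) * Real.sqrt l0)) ^ (2:ℝ)
      * (1 + Real.log (1 + Real.sqrt x / ((1 + Real.log 2) ^ (r/2) * Real.sqrt l0))) ^ r
    ≤ (x / l0) ^ (1:ℝ) * (1 + Real.log (1 + x / l0)) ^ r := by
  have hL : (0:ℝ) ≤ Real.log 2 := Real.log_nonneg (by norm_num)
  set c : ℝ := (1 + Real.log 2) ^ (r/2) with hc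
  have hc1 : 1 ≤ c := Real.one_le_rpow (by linarith) (by linarith)
  have hcpos : 0 < c := lt_of_lt_of_le one_pos hc1
  have hcsq : c * c = (1 + Real.log 2) ^ r := by
    rw [hc, ← Real.rpow_add (by linarith), add_halves]
  set u : ℝ := x / l0 with hu
  have hu0 : 0 ≤ u := div_nonneg hx hl.le
  have hsq : Real.sqrt x / (c * Real.sqrt l0) = Real.sqrt u / c := by
    rw [hu, Real.sqrt_div hx, div_div, mul_comm c]
  set t : ℝ := Real.sqrt u / c with ht
  have ht0 : 0 ≤ t := div_nonneg (Real.sqrt_nonneg u) hcpos.le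
  have htu : t ≤ 1 + u := by
    have h1 : t ≤ Real.sqrt u := div_le_self (Real.sqrt_nonneg u) hc1
    have h2 : Real.sqrt u ≤ 1 + u := by
      nlinarith [Real.sq_sqrt hu0, Real.sqrt_nonneg u, sq_nonneg (Real.sqrt u - 1)]
    linarith
  have hlog1 : Real.log (1 + t) ≤ Real.log 2 + Real.log (1 + u) := by
    have : Real.log (1 + t) ≤ Real.log (2 * (1 + u)) :=
      Real.log_le_log (by linarith) (by linarith)
    rwa [Real.log_mul (by norm_num) (by positivity)] at this
  have hlogu : 0 ≤ Real.log (1 + u) := Real.log_nonneg (by linarith)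
  have hlogt : 0 ≤ Real.log (1 + t) := Real.log_nonneg (by linarith)
  have hkey : 1 + Real.log (1 + t) ≤ (1 + Real.log 2) * (1 + Real.log (1 + u)) := by
    nlinarith [mul_nonneg hL hlogu]
  have hpow : (1 + Real.log (1 + t)) ^ r
      ≤ (1 + Real.log 2) ^ r * (1 + Real.log (1 + u)) ^ r := by
    rw [← Real.mul_rpow (by linarith) (by linarith)]
    exact Real.rpow_le_rpow (by linarith) hkey hr
  -- base term
  have hbase : (Real.sqrt x / (c * Real.sqrt l0)) ^ (2:ℝ) = u / (c * c) := by
    rw [hsq, show (2:ℝ) = ((2:ℕ):ℝ) by norm_num, Real.rpow_natCast]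
    rw [div_pow, Real.sq_sqrt hu0]
    ring_nf
  rw [hbase, hsq, Real.rpow_one]
  calc u / (c * c) * (1 + Real.log (1 + t)) ^ r
      ≤ u / (c * c) * ((1 + Real.log 2) ^ r * (1 + Real.log (1 + u)) ^ r) := by
        apply mul_le_mul_of_nonneg_left hpow (by positivity)
    _ = u * (1 + Real.log (1 + u)) ^ r := by
        have hcc : c * c ≠ 0 := by positivity
        rw [← hcsq]
        field_simp
        try ring

/-- Reverse pointwise comparison: `φ_{1,r}(x / (2^r l^2)) ≤ φ_{2,r}(√x / l)`. -/
lemma claimB (r : ℝ) (hr : 0 ≤ r) (x l : ℝ) (hx : 0 ≤ x) (hl : 0 < l) :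
    (x / ((2:ℝ) ^ r * l ^ 2)) ^ (1:ℝ)
      * (1 + Real.log (1 + x / ((2:ℝ) ^ r * l ^ 2))) ^ r
    ≤ (Real.sqrt x / l) ^ (2:ℝ) * (1 + Real.log (1 + Real.sqrt x / l)) ^ r := by
  have h2r : (1:ℝ) ≤ (2:ℝ) ^ r := Real.one_le_rpow (by norm_num) hr
  have h2rpos : (0:ℝ) < (2:ℝ) ^ r := lt_of_lt_of_le one_pos h2r
  set t : ℝ := Real.sqrt x / l with ht
  have ht0 : 0 ≤ t := div_nonneg (Real.sqrt_nonneg x) hl.le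
  have htsq : t ^ 2 = x / l ^ 2 := by
    rw [ht, div_pow, Real.sq_sqrt hx]
  have hxval : x / ((2:ℝ) ^ r * l ^ 2) = t ^ 2 / (2:ℝ) ^ r := by
    rw [htsq, div_div, mul_comm ((2:ℝ) ^ r)]
  have hle : x / ((2:ℝ) ^ r * l ^ 2) ≤ t ^ 2 := by
    rw [hxval]
    exact div_le_self (sq_nonneg t) h2r
  have hlog : Real.log (1 + x / ((2:ℝ) ^ r * l ^ 2)) ≤ 2 * Real.log (1 + t) := by
    have h1 : (1:ℝ) + x / ((2:ℝ) ^ r * l ^ 2) ≤ (1 + t) ^ 2 := by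
      nlinarith [sq_nonneg t]
    calc Real.log (1 + x / ((2:ℝ) ^ r * l ^ 2)) ≤ Real.log ((1 + t) ^ 2) := by
          apply Real.log_le_log (by positivity) h1
      _ = 2 * Real.log (1 + t) := by
          rw [Real.log_pow]; push_cast; ring
  have hlogt : 0 ≤ Real.log (1 + t) := Real.log_nonneg (by linarith)
  have hkey : 1 + Real.log (1 + x / ((2:ℝ) ^ r * l ^ 2))
      ≤ 2 * (1 + Real.log (1 + t)) := by linarith
  have hbnn : (0:ℝ) ≤ 1 + Real.log (1 + x / ((2:ℝ) ^ r * l ^ 2)) := by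
    have h0 : 0 ≤ x / ((2:ℝ) ^ r * l ^ 2) := by positivity
    have : 0 ≤ Real.log (1 + x / ((2:ℝ) ^ r * l ^ 2)) := Real.log_nonneg (by linarith)
    linarith
  have hpow : (1 + Real.log (1 + x / ((2:ℝ) ^ r * l ^ 2))) ^ r
      ≤ (2:ℝ) ^ r * (1 + Real.log (1 + t)) ^ r := by
    rw [← Real.mul_rpow (by norm_num) (by linarith)]
    exact Real.rpow_le_rpow hbnn hkey hr
  rw [Real.rpow_one, show (2:ℝ) = ((2:ℕ):ℝ) by norm_num, Real.rpow_natCast]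
  calc x / ((2:ℝ) ^ r * l ^ 2) * (1 + Real.log (1 + x / ((2:ℝ) ^ r * l ^ 2))) ^ r
      ≤ t ^ 2 / (2:ℝ) ^ r * ((2:ℝ) ^ r * (1 + Real.log (1 + t)) ^ r) := by
        apply mul_le_mul (le_of_eq hxval) hpow (Real.rpow_nonneg hbnn r) (by positivity)
    _ = t ^ 2 * (1 + Real.log (1 + t)) ^ r := by
        field_simp
        try ring

theorem stmt7 (r : ℝ) (hr : 0 ≤ r) :
    ∃ c > (0 : ℝ),
      ∀ (Ω : Type) [MeasurableSpace Ω] (μ : Measure Ω) [IsProbabilityMeasure μ]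
        (X : Ω → ℝ), Measurable X → (∀ ω, 0 ≤ X ω) →
        orliczNorm μ 2 r (fun ω => Real.sqrt (X ω)) ≤ c * (orliczNorm μ 1 r X) ^ ((1 : ℝ) / 2) := by
  have hL : (0:ℝ) ≤ Real.log 2 := Real.log_nonneg (by norm_num)
  set c : ℝ := (1 + Real.log 2) ^ (r/2) with hc
  have hc1 : 1 ≤ c := Real.one_le_rpow (by linarith) (by linarith)
  have hcpos : 0 < c := lt_of_lt_of_le one_pos hc1
  refine ⟨c, hcpos, ?_⟩
  intro Ω _ μ _ X hX hX0
  set A : Set ℝ := {l : ℝ | 0 < l ∧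
    ∫⁻ ω, ENNReal.ofReal
      ((|X ω| / l) ^ (1:ℝ) * (1 + Real.log (1 + |X ω| / l)) ^ r) ∂μ ≤ 1} with hA
  set B : Set ℝ := {l : ℝ | 0 < l ∧
    ∫⁻ ω, ENNReal.ofReal
      ((|Real.sqrt (X ω)| / l) ^ (2:ℝ)
        * (1 + Real.log (1 + |Real.sqrt (X ω)| / l)) ^ r) ∂μ ≤ 1} with hB
  have hnormA : orliczNorm μ 1 r X = sInf A := rfl
  have hnormB : orliczNorm μ 2 r (fun ω => Real.sqrt (X ω)) = sInf B := rfl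
  -- membership transfer A → B
  have hmem : ∀ l0 ∈ A, c * Real.sqrt l0 ∈ B := by
    intro l0 hl0
    obtain ⟨hl0pos, hl0int⟩ := hl0
    refine ⟨by positivity, ?_⟩
    refine le_trans (lintegral_mono fun ω => ?_) hl0int
    apply ENNReal.ofReal_le_ofReal
    have hxa : |X ω| = X ω := abs_of_nonneg (hX0 ω)
    have hsa : |Real.sqrt (X ω)| = Real.sqrt (X ω) :=
      abs_of_nonneg (Real.sqrt_nonneg _)
    rw [hxa, hsa]
    exact claimA r hr (X ω) l0 (hX0 ω) hl0pos
  -- membership transfer B → A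
  have hmem' : ∀ l ∈ B, (2:ℝ) ^ r * l ^ 2 ∈ A := by
    intro l hl
    obtain ⟨hlpos, hlint⟩ := hl
    refine ⟨by positivity, ?_⟩
    refine le_trans (lintegral_mono fun ω => ?_) hlint
    apply ENNReal.ofReal_le_ofReal
    have hxa : |X ω| = X ω := abs_of_nonneg (hX0 ω)
    have hsa : |Real.sqrt (X ω)| = Real.sqrt (X ω) :=
      abs_of_nonneg (Real.sqrt_nonneg _)
    rw [hxa, hsa]
    exact claimB r hr (X ω) l (hX0 ω) hlpos
  rcases Set.eq_empty_or_nonempty A with hAe | hAne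
  · -- A empty, hence B empty, both norms 0
    have hBe : B = ∅ := by
      rw [Set.eq_empty_iff_forall_notMem]
      intro l hl
      have := hmem' l hl
      rw [hAe] at this
      exact this
    rw [hnormA, hnormB, hAe, hBe, Real.sInf_empty,
      Real.zero_rpow (by norm_num : (1:ℝ)/2 ≠ 0), mul_zero]
  · -- A nonempty
    have hB0 : 0 ≤ sInf B := Real.sInf_nonneg fun l hl => hl.1.le
    have hBle : ∀ l0 ∈ A, sInf B ≤ c * Real.sqrt l0 := by
      intro l0 hl0
      exact csInf_le ⟨0, fun l hl => hl.1.le⟩ (hmem l0 hl0)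
    set m : ℝ := sInf B with hm
    have hmsq : (m / c) ^ 2 ≤ sInf A := by
      apply le_csInf hAne
      intro l0 hl0
      have h1 : m ≤ c * Real.sqrt l0 := hBle l0 hl0
      have h2 : m / c ≤ Real.sqrt l0 := by
        rw [div_le_iff₀ hcpos]
        linarith [h1, mul_comm c (Real.sqrt l0)]
      calc (m / c) ^ 2 ≤ Real.sqrt l0 ^ 2 := by
            apply sq_le_sq'
              (by linarith [div_nonneg hB0 hcpos.le, Real.sqrt_nonneg l0]) h2
        _ = l0 := Real.sq_sqrt hl0.1.le
      
    have hAinf0 : 0 ≤ sInf A := le_trans (sq_nonneg _) hmsq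
    rw [hnormA, hnormB]
    have : m / c ≤ (sInf A) ^ ((1:ℝ)/2) := by
      rw [← Real.sqrt_eq_rpow]
      have := Real.sqrt_le_sqrt hmsq
      rwa [Real.sqrt_sq (div_nonneg hB0 hcpos.le)] at this
    calc m = c * (m / c) := by field_simp
      _ ≤ c * (sInf A) ^ ((1:ℝ)/2) := mul_le_mul_of_nonneg_left this hcpos.le
end

section
/- Let $(a_{\mathbf n})_{\mathbf n\in\mathbb N^d}$ be positive numbers, nondecreasing for the coordinatewise order, with $c:=\sup_{\mathbf n}\max_{1\le i\le d} a_{\mathbf n + n_i\mathbf e_i}/a_{\mathbf n} < \infty$. Let $(m\circ T^{\mathbf i})_{\mathbf i\in\mathbb Z^d}$ be a strictly stationary orthomartingale difference random field with respect to a commuting filtration $(T^{-\mathbf i}\mathcal F_0)$. For $0\le i\le d$ let $M_i := \sup_{\mathbf n\in\mathbb N_i} |S_{\mathbf n}(m)|/a_{\mathbf n}$, where $\mathbb N_i$ is the set of $\mathbf n\succcurlyeq\mathbf 1$ whose coordinates $i+1,\dots,d$ are powers of $2$. Then for every $x>0$ and every $i\in\{1,\dots,d\}$, $\mathbb{P}\{M_i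 > x\} \le \int_1^{\infty} \mathbb{P}\{M_{i-1} > ux/(2c)\}\,\mathrm du$. -/
open MeasureTheory

/-- Partial sums on rectangles: `S_n(m)(ω) = ∑_{0 ≼ i ≼ n-1} m(T^i ω)`. -/
noncomputable def Sn {Ω : Type*} (d : ℕ) (T : (Fin d → ℤ) → Ω → Ω) (m : Ω → ℝ)
    (n : Fin d → ℕ) (ω : Ω) : ℝ :=
  ∑ i ∈ Fintype.piFinset (fun q => Finset.range (n q)), m (T (fun q => (i q : ℤ)) ω)

/-- `ℕ_i`: the indices `n ≽ 1` in `ℕ^d` whose coordinates of index `> i`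
(0-based: of index `≥ i`) are powers of `2`. -/
def dyadicSet (d i : ℕ) : Set (Fin d → ℕ) :=
  {n | (∀ q, 1 ≤ n q) ∧ ∀ q : Fin d, i ≤ (q : ℕ) → ∃ k : ℕ, n q = 2 ^ k}

/-- The maximal function `M_i = sup_{n ∈ ℕ_i} |S_n(m)| / a_n`. -/
noncomputable def Mi {Ω : Type*} (d : ℕ) (T : (Fin d → ℤ) → Ω → Ω) (m : Ω → ℝ)
    (a : (Fin d → ℕ) → ℝ) (i : ℕ) (ω : Ω) : ENNReal :=
  ⨆ n : dyadicSet d i, ENNReal.ofReal (|Sn d T m (n : Fin d → ℕ) ω| / a (n : Fin d → ℕ))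


open Finset Set
open scoped NNReal ENNReal

set_option maxHeartbeats 2000000
set_option synthInstance.maxHeartbeats 1000000

section AuxLemmas

lemma subst_mul' (b : ℝ) (hb : 0 < b) (g : ℝ → ENNReal) (hg : Measurable g) :
    ∫⁻ u in Set.Ioi (1:ℝ), g (u * b) = (ENNReal.ofReal b)⁻¹ * ∫⁻ t in Set.Ioi b, g t := by
  have hφ : Measurable (fun u : ℝ => b * u) := (measurable_const.mul measurable_id)
  have hpre : (fun u : ℝ => b * u) ⁻¹' (Set.Ioi b) = Set.Ioi 1 := by
    ext u; simp only [Set.mem_preimage, Set.mem_Ioi]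
    constructor
    · intro h; by_contra hu; push_neg at hu
      exact absurd h (not_lt.2 (by nlinarith))
    · intro h; nlinarith
  have hmap : Measure.map (fun u : ℝ => b * u) volume
      = ENNReal.ofReal b⁻¹ • volume := by
    rw [Real.map_volume_mul_left hb.ne', abs_of_pos (inv_pos.2 hb)]
  calc ∫⁻ u in Set.Ioi (1:ℝ), g (u * b)
      = ∫⁻ u in Set.Ioi (1:ℝ), g (b * u) := by
        refine lintegral_congr fun u => by rw [mul_comm]
    _ = ∫⁻ t, g t ∂(Measure.map (fun u : ℝ => b * u) (volume.restrict (Set.Ioi 1))) := by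
        rw [lintegral_map hg hφ]
    _ = ∫⁻ t, g t ∂((ENNReal.ofReal b⁻¹ • volume).restrict (Set.Ioi b)) := by
        conv_lhs => rw [← hpre]
        rw [← Measure.restrict_map hφ measurableSet_Ioi, hmap]
    _ = (ENNReal.ofReal b)⁻¹ * ∫⁻ t in Set.Ioi b, g t := by
        rw [Measure.restrict_smul, lintegral_smul_measure,
          ENNReal.ofReal_inv_of_pos hb, smul_eq_mul]

lemma subst_add' (b : ℝ) (g : ℝ → ENNReal) (hg : Measurable g) :
    ∫⁻ u in Set.Ioi (0:ℝ), g (u + b) = ∫⁻ t in Set.Ioi b, g t := by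
  have hφ : Measurable (fun u : ℝ => u + b) := (measurable_id.add_const b)
  have hpre : (fun u : ℝ => u + b) ⁻¹' (Set.Ioi b) = Set.Ioi 0 := by
    ext u; simp [Set.mem_Ioi]
  calc ∫⁻ u in Set.Ioi (0:ℝ), g (u + b)
      = ∫⁻ t, g t ∂(Measure.map (fun u : ℝ => u + b) (volume.restrict (Set.Ioi 0))) := by
        rw [lintegral_map hg hφ]
    _ = ∫⁻ t in Set.Ioi b, g t := by
        conv_lhs => rw [← hpre]
        rw [← Measure.restrict_map hφ measurableSet_Ioi, map_add_right_eq_self volume b]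

lemma tail_lintegral' {Ω : Type*} [m0 : MeasurableSpace Ω] (μ : Measure Ω)
    [IsProbabilityMeasure μ] (Z : Ω → ℝ) (hZm : Measurable Z)
    (b : ℝ) (hb : 0 < b) :
    ∫⁻ t in Set.Ioi b, μ {ω | t < Z ω} = ∫⁻ ω, ENNReal.ofReal (max (Z ω - b) 0) ∂μ := by
  have hmax_mble : AEMeasurable (fun ω => max (Z ω - b) 0) μ :=
    ((hZm.sub measurable_const).max measurable_const).aemeasurable
  have hlayer := lintegral_eq_lintegral_meas_lt μ
    (Filter.Eventually.of_forall fun ω => le_max_right (Z ω - b) 0) hmax_mble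
  have hsets : ∀ t : ℝ, 0 < t →
      {ω | t < max (Z ω - b) 0} = {ω | t + b < Z ω} := by
    intro t ht; ext ω
    simp only [Set.mem_setOf_eq, lt_max_iff]
    constructor
    · rintro (h | h)
      · linarith
      · linarith
    · intro h; left; linarith
  have hganti : Antitone (fun t : ℝ => μ {ω | t < Z ω}) := by
    intro s t hst
    exact measure_mono fun ω h => lt_of_le_of_lt hst h
  have hgmeas : Measurable (fun t : ℝ => μ {ω | t < Z ω}) := hganti.measurable
  calc ∫⁻ t in Set.Ioi b, μ {ω | t < Z ω}
      = ∫⁻ u in Set.Ioi (0:ℝ), μ {ω | u + b < Z ω} := (subst_add' b _ hgmeas).symm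
    _ = ∫⁻ u in Set.Ioi (0:ℝ), μ {ω | u < max (Z ω - b) 0} := by
        refine (setLIntegral_congr_fun measurableSet_Ioi
          (fun u hu => ?_)).symm
        rw [hsets u hu]
    _ = ∫⁻ ω, ENNReal.ofReal (max (Z ω - b) 0) ∂μ := hlayer.symm

lemma condexp_comp_emb' {Ω : Type*} (𝒜 : MeasurableSpace Ω) [m0 : MeasurableSpace Ω]
    (μ : Measure Ω)
    [IsProbabilityMeasure μ] (S : Ω → Ω) (hS : MeasurePreserving S μ μ)
    (hemb : MeasurableEmbedding S) (h𝒜 : 𝒜 ≤ m0)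
    (g : Ω → ℝ) (hg : Integrable g μ) :
    (μ[g|𝒜]) ∘ S =ᵐ[μ] μ[g ∘ S | MeasurableSpace.comap S 𝒜] := by
  have hm : MeasurableSpace.comap S 𝒜 ≤ m0 :=
    le_trans (MeasurableSpace.comap_mono h𝒜) (measurable_iff_comap_le.mp hemb.measurable)
  refine ae_eq_condExp_of_forall_setIntegral_eq hm
    ((hS.integrable_comp hg.aestronglyMeasurable).2 hg) ?_ ?_ ?_
  · intro s _ _
    have hci : Integrable (μ[g|𝒜]) μ := integrable_condExp
    exact ((hS.integrable_comp hci.aestronglyMeasurable).2 hci).integrableOn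
  · rintro s ⟨t, ht, rfl⟩ _
    calc ∫ x in S ⁻¹' t, (μ[g|𝒜] ∘ S) x ∂μ
        = ∫ x in S ⁻¹' t, (μ[g|𝒜]) (S x) ∂μ := rfl
      _ = ∫ y in t, (μ[g|𝒜]) y ∂μ := hS.setIntegral_preimage_emb hemb _ t
      _ = ∫ y in t, g y ∂μ := setIntegral_condExp h𝒜 hg ht
      _ = ∫ x in S ⁻¹' t, g (S x) ∂μ := (hS.setIntegral_preimage_emb hemb _ t).symm
      _ = ∫ x in S ⁻¹' t, (g ∘ S) x ∂μ := rfl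
  · refine StronglyMeasurable.aestronglyMeasurable ?_
    have hsm : StronglyMeasurable[𝒜] (μ[g|𝒜]) := stronglyMeasurable_condExp
    exact hsm.comp_measurable (measurable_iff_comap_le.mpr le_rfl)

lemma condexp_iSup_zero' {Ω : Type*} (𝒦 : ℕ → MeasurableSpace Ω) [m0 : MeasurableSpace Ω]
    (μ : Measure Ω)
    [IsProbabilityMeasure μ] (hmono : Monotone 𝒦)
    (hle : ∀ k, 𝒦 k ≤ m0) (Y : Ω → ℝ)
    (h0 : ∀ k, μ[Y | 𝒦 k] =ᵐ[μ] 0) : μ[Y | ⨆ k, 𝒦 k] =ᵐ[μ] 0 := by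
  set ℱ : Filtration ℕ m0 := ⟨𝒦, hmono, hle⟩ with hℱ
  have hsup : (⨆ k, ℱ k) = ⨆ k, 𝒦 k := rfl
  set g : Ω → ℝ := μ[Y | ⨆ k, 𝒦 k] with hgdef
  have hgint : Integrable g μ := integrable_condExp
  have hgmeas : StronglyMeasurable[⨆ k, ℱ k] g := by
    rw [hsup]; exact stronglyMeasurable_condExp
  have htend := hgint.tendsto_ae_condExp hgmeas
  have hck : ∀ k, μ[g | ℱ k] =ᵐ[μ] 0 := by
    intro k
    have h1 : μ[g | 𝒦 k] =ᵐ[μ] μ[Y | 𝒦 k] :=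
      condExp_condExp_of_le (le_iSup 𝒦 k) (iSup_le hle)
    exact h1.trans (h0 k)
  filter_upwards [htend, ae_all_iff.2 hck] with ω h1 h2
  have hz : ∀ k : ℕ, (μ[g|ℱ k]) ω = (0:ℝ) := fun k => h2 k
  have : Filter.Tendsto (fun _ : ℕ => (0:ℝ)) Filter.atTop (nhds (g ω)) :=
    h1.congr hz
  simpa using tendsto_nhds_unique this tendsto_const_nhds

lemma doob_tail' {Ω : Type*} [m0 : MeasurableSpace Ω] {μ : Measure Ω} [IsProbabilityMeasure μ]
    (ℱ : Filtration ℕ m0) (Z : Ω → ℝ) (hZint : Integrable Z μ) (hZ0 : 0 ≤ Z)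
    (b : ℝ) (hb : 0 < b) :
    μ {ω | ∃ j : ℕ, 2 * b < (μ[Z | ℱ j]) ω} ≤
      (ENNReal.ofReal b)⁻¹ * ENNReal.ofReal (∫ ω, max (Z ω - b) 0 ∂μ) := by
  classical
  set G : ℕ → Ω → ℝ := fun j => μ[Z | ℱ j] with hG
  have hGsub : Submartingale (G⁺) ℱ μ := (martingale_condExp Z ℱ μ).submartingale.pos
  have hGnn : 0 ≤ G⁺ := fun j ω => posPart_nonneg _
  set ε : ℝ≥0 := Real.toNNReal (2 * b) with hε
  have hεR : (ε : ℝ) = 2 * b := Real.coe_toNNReal _ (by linarith)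
  set C : ℕ → Set Ω := fun J =>
    {ω | (ε : ℝ) ≤ (range (J + 1)).sup' nonempty_range_add_one fun k => (G⁺) k ω} with hC
  have hGj_nonneg : ∀ j, 0 ≤ᵐ[μ] G j := fun j => condExp_nonneg (Filter.Eventually.of_forall hZ0)
  have hGmeasJ : ∀ {k J : ℕ}, k ≤ J → Measurable[ℱ J] ((G⁺) k) := by
    intro k J hkJ
    have h1 : StronglyMeasurable[ℱ k] (G k) := stronglyMeasurable_condExp
    have h2 : Measurable[ℱ J] (G k) := (h1.mono (ℱ.mono hkJ)).measurable
    exact h2.max measurable_const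
  have hCmeas : ∀ J, MeasurableSet[ℱ J] (C J) := by
    intro J
    have hsupm : Measurable[ℱ J]
        (fun ω => (range (J + 1)).sup' nonempty_range_add_one fun k => (G⁺) k ω) :=
      @Finset.measurable_range_sup'' ℝ _ Ω (ℱ J) _ _ (fun k => (G⁺) k) J
        (fun k hk => hGmeasJ hk)
    exact measurableSet_le measurable_const hsupm
  have hCmeas0 : ∀ J, MeasurableSet (C J) := fun J => ℱ.le J _ (hCmeas J)
  have hmaxint : Integrable (fun ω => max (Z ω - b) 0) μ :=
    (hZint.sub (integrable_const b)).pos_part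
  have hE0 : 0 ≤ ∫ ω, max (Z ω - b) 0 ∂μ :=
    integral_nonneg fun ω => le_max_right _ _
  have key : ∀ J, ENNReal.ofReal b * μ (C J) ≤ ENNReal.ofReal (∫ ω, max (Z ω - b) 0 ∂μ) := by
    intro J
    have hdoob := maximal_ineq hGsub hGnn J (ε := ε)
    have hint1 : ∫ ω in C J, (G⁺) J ω ∂μ = ∫ ω in C J, G J ω ∂μ := by
      refine setIntegral_congr_ae (hCmeas0 J) ?_
      filter_upwards [hGj_nonneg J] with ω hω _
      exact posPart_eq_self.2 hω
    have hint2 : ∫ ω in C J, G J ω ∂μ = ∫ ω in C J, Z ω ∂μ :=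
      setIntegral_condExp (ℱ.le J) hZint (hCmeas J)
    have hint3 : ∫ ω in C J, Z ω ∂μ ≤
        (∫ ω, max (Z ω - b) 0 ∂μ) + b * (μ (C J)).toReal := by
      have h1 : ∫ ω in C J, Z ω ∂μ ≤ ∫ ω in C J, (max (Z ω - b) 0 + b) ∂μ := by
        refine setIntegral_mono_on hZint.integrableOn
          (hmaxint.add (integrable_const b)).integrableOn (hCmeas0 J) ?_
        intro ω _
        rcases le_or_gt (Z ω) b with h | h
        · have : (0:ℝ) ≤ max (Z ω - b) 0 := le_max_right _ _
          linarith
        · have : Z ω - b ≤ max (Z ω - b) 0 := le_max_left _ _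
          linarith
      have h2 : ∫ ω in C J, (max (Z ω - b) 0 + b) ∂μ
          = (∫ ω in C J, max (Z ω - b) 0 ∂μ) + ∫ ω in C J, (b:ℝ) ∂μ :=
        integral_add hmaxint.integrableOn (integrable_const b).integrableOn
      have h3 : ∫ ω in C J, max (Z ω - b) 0 ∂μ ≤ ∫ ω, max (Z ω - b) 0 ∂μ :=
        setIntegral_le_integral hmaxint
          (Filter.Eventually.of_forall fun ω => le_max_right _ _)
      have h4 : ∫ ω in C J, (b:ℝ) ∂μ = b * (μ (C J)).toReal := by
        rw [setIntegral_const, smul_eq_mul, mul_comm, measureReal_def]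
      calc ∫ ω in C J, Z ω ∂μ ≤ _ := h1
        _ = _ := h2
        _ ≤ _ := by rw [h4]; linarith [h3]
    have hCfin : μ (C J) ≠ ⊤ := measure_ne_top μ _
    have hstep : (ENNReal.ofReal b + ENNReal.ofReal b) * μ (C J) ≤
        ENNReal.ofReal (∫ ω, max (Z ω - b) 0 ∂μ) + ENNReal.ofReal b * μ (C J) := by
      have hl : (ε : ℝ≥0∞) • μ (C J) = (ENNReal.ofReal b + ENNReal.ofReal b) * μ (C J) := by
        rw [smul_eq_mul, ← ENNReal.ofReal_add hb.le hb.le]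
        congr 1
        rw [← ENNReal.ofReal_coe_nnreal, hεR]
        ring_nf
      have hr : ENNReal.ofReal (∫ ω in C J, (G⁺) J ω ∂μ) ≤
          ENNReal.ofReal (∫ ω, max (Z ω - b) 0 ∂μ) + ENNReal.ofReal b * μ (C J) := by
        rw [hint1, hint2]
        refine le_trans (ENNReal.ofReal_le_ofReal hint3) ?_
        rw [ENNReal.ofReal_add hE0 (by positivity), ENNReal.ofReal_mul hb.le,
          ENNReal.ofReal_toReal hCfin]
      exact hl ▸ (hdoob.trans hr)
    rw [add_mul] at hstep
    exact (ENNReal.add_le_add_iff_right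
      (by exact ENNReal.mul_ne_top ENNReal.ofReal_ne_top hCfin)).1 hstep
  have hsub : {ω | ∃ j : ℕ, 2 * b < (μ[Z | ℱ j]) ω} ⊆ ⋃ J, C J := by
    rintro ω ⟨j, hj⟩
    refine Set.mem_iUnion.2 ⟨j, ?_⟩
    have h1 : G j ω ≤ (G⁺) j ω := le_posPart _
    have h2 : (G⁺) j ω ≤ (range (j + 1)).sup' nonempty_range_add_one fun k => (G⁺) k ω :=
      Finset.le_sup' (f := fun k => (G⁺) k ω) (mem_range.2 (Nat.lt_succ_self j))
    simp only [C, Set.mem_setOf_eq, hεR]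
    exact le_trans (le_of_lt hj) (h1.trans h2)
  have hmono : Monotone C := by
    intro J J' hJJ ω hω
    simp only [C, Set.mem_setOf_eq] at hω ⊢
    refine le_trans hω ?_
    exact Finset.sup'_mono _ (Finset.range_subset_range.2 (by omega)) nonempty_range_add_one
  have hlim : μ (⋃ J, C J) = ⨆ J, μ (C J) := hmono.directed_le.measure_iUnion
  have hbound : μ (⋃ J, C J) ≤
      (ENNReal.ofReal b)⁻¹ * ENNReal.ofReal (∫ ω, max (Z ω - b) 0 ∂μ) := by
    rw [hlim]
    refine iSup_le fun J => ?_
    have hkey := key J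
    have hbne : ENNReal.ofReal b ≠ 0 := by
      simp [ENNReal.ofReal_eq_zero, not_le, hb]
    calc μ (C J) = (ENNReal.ofReal b)⁻¹ * (ENNReal.ofReal b * μ (C J)) := by
          rw [← mul_assoc, ENNReal.inv_mul_cancel hbne ENNReal.ofReal_ne_top, one_mul]
      _ ≤ _ := by exact mul_le_mul_right hkey _
  exact le_trans (measure_mono hsub) hbound

end AuxLemmas

theorem stmt13_aux (d : ℕ) (hd : 1 ≤ d)
    {Ω : Type*} (F0 : MeasurableSpace Ω) [m0 : MeasurableSpace Ω] (μ : Measure Ω)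
    [IsProbabilityMeasure μ]
    (T : (Fin d → ℤ) → Ω → Ω)
    (hTmeas : ∀ i, Measurable (T i))
    (hTpres : ∀ i, MeasurePreserving (T i) μ μ)
    (hTact : ∀ i j ω, T i (T j ω) = T (i + j) ω) (hT0 : ∀ ω, T 0 ω = ω)
    (hF0 : F0 ≤ m0)
    -- `(T^{-i} F0)_i` is a filtration
    (hfilt : ∀ i j : Fin d → ℤ, i ≤ j →
      MeasurableSpace.comap (T i) F0 ≤ MeasurableSpace.comap (T j) F0)
    -- the filtration is commuting
    (hcomm : ∀ Y : Ω → ℝ, Integrable Y μ → ∀ i j : Fin d → ℤ,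
      μ[ μ[Y | MeasurableSpace.comap (T i) F0] | MeasurableSpace.comap (T j) F0]
        =ᵐ[μ] μ[Y | MeasurableSpace.comap (T (i ⊓ j)) F0])
    (m : Ω → ℝ) (hmint : Integrable m μ) (hmmeas : StronglyMeasurable[F0] m)
    -- orthomartingale differences: `E[m | T_q F0] = 0` for every `q`
    (hortho : ∀ q : Fin d,
      μ[m | MeasurableSpace.comap (T (-Pi.single q 1)) F0] =ᵐ[μ] 0)
    (a : (Fin d → ℕ) → ℝ) (hapos : ∀ n, 0 < a n)
    (hamono : ∀ n n' : Fin d → ℕ, n ≤ n' → a n ≤ a n')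
    (c : ℝ) (hc : 0 < c)
    (hca : ∀ (n : Fin d → ℕ) (q : Fin d), a (Function.update n q (2 * n q)) ≤ c * a n)
    (i : ℕ) (hi1 : 1 ≤ i) (hid : i ≤ d) (x : ℝ) (hx : 0 < x) :
    μ {ω | ENNReal.ofReal x < Mi d T m a i ω} ≤
      ∫⁻ u in Set.Ioi (1 : ℝ),
        μ {ω | ENNReal.ofReal (u * x / (2 * c)) < Mi d T m a (i - 1) ω} := by
  classical
  have hqlt : i - 1 < d := by omega
  set q : Fin d := ⟨i - 1, hqlt⟩ with hqdef
  -- basic σ-algebra facts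
  have h𝒢le : ∀ v : Fin d → ℤ, MeasurableSpace.comap (T v) F0 ≤ m0 := by
    intro v
    have h1 : MeasurableSpace.comap (T v) F0 ≤ MeasurableSpace.comap (T v) m0 :=
      MeasurableSpace.comap_mono hF0
    have h2 : MeasurableSpace.comap (T v) m0 ≤ m0 := measurable_iff_comap_le.mp (hTmeas v)
    exact le_trans h1 h2
  have hTemb : ∀ v : Fin d → ℤ, MeasurableEmbedding (T v) := by
    intro v
    have h1 : ∀ ω, T (-v) (T v ω) = ω := fun ω => by rw [hTact]; simp [hT0]
    have h2 : ∀ ω, T v (T (-v) ω) = ω := fun ω => by rw [hTact]; simp [hT0]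
    exact (⟨⟨T v, T (-v), h1, h2⟩, hTmeas v, hTmeas (-v)⟩ :
      @MeasurableEquiv Ω Ω m0 m0).measurableEmbedding
  have hm0meas : Measurable[m0] m := (hmmeas.mono hF0).measurable
  have hmT : ∀ v : Fin d → ℤ, Measurable[m0] (m ∘ T v) := fun v => hm0meas.comp (hTmeas v)
  have hint : ∀ v : Fin d → ℤ, Integrable (m ∘ T v) μ := fun v =>
    ((hTpres v).integrable_comp hmint.aestronglyMeasurable).2 hmint
  have hcomap_comp : ∀ u v : Fin d → ℤ,
      MeasurableSpace.comap (T v) (MeasurableSpace.comap (T u) F0)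
        = MeasurableSpace.comap (T (u + v)) F0 := by
    intro u v
    rw [MeasurableSpace.comap_comp]
    congr 1
    funext ω
    exact hTact u v ω
  have hmT𝒢 : ∀ u v : Fin d → ℤ, u ≤ v →
      StronglyMeasurable[MeasurableSpace.comap (T v) F0] (m ∘ T u) := by
    intro u v huv
    have h1 : @Measurable Ω Ω (MeasurableSpace.comap (T u) F0) F0 (T u) :=
      measurable_iff_comap_le.mpr le_rfl
    exact (hmmeas.comp_measurable h1).mono (hfilt u v huv)
  -- vanishing conditional expectations with respect to comap σ-algebras
  have hzero𝒢 : ∀ ii v : Fin d → ℤ, v q < ii q →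
      μ[(m ∘ T ii) | MeasurableSpace.comap (T v) F0] =ᵐ[μ] 0 := by
    intro ii v hv
    have hbase : μ[(m ∘ T ii) | MeasurableSpace.comap (T (ii - Pi.single q 1)) F0] =ᵐ[μ] 0 := by
      have h1 := condexp_comp_emb' (MeasurableSpace.comap (T (-Pi.single q 1)) F0) μ (T ii)
        (hTpres ii) (hTemb ii) (h𝒢le _) m hmint
      have h2 : MeasurableSpace.comap (T ii) (MeasurableSpace.comap (T (-Pi.single q 1)) F0)
          = MeasurableSpace.comap (T (ii - Pi.single q 1)) F0 := by
        rw [hcomap_comp, neg_add_eq_sub]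
      rw [h2] at h1
      have h3 : (μ[m | MeasurableSpace.comap (T (-Pi.single q 1)) F0]) ∘ T ii
          =ᵐ[μ] (0 : Ω → ℝ) ∘ T ii := by
        refine ae_eq_comp (hTmeas ii).aemeasurable ?_
        rw [(hTpres ii).map_eq]
        exact hortho q
      have h4 : ((0 : Ω → ℝ) ∘ T ii) = (0 : Ω → ℝ) := rfl
      rw [h4] at h3
      exact (h3.symm.trans h1).symm
    have hYint := hint ii
    have h1 : μ[(m ∘ T ii) | MeasurableSpace.comap (T ii) F0] = m ∘ T ii :=
      condExp_of_stronglyMeasurable (h𝒢le ii) (hmT𝒢 ii ii le_rfl) hYint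
    have h2 := hcomm (m ∘ T ii) hYint ii v
    rw [h1] at h2
    have hle2 : ii ⊓ v ≤ ii - Pi.single q 1 := by
      intro r
      rcases eq_or_ne r q with hr | hr
      · simp only [hr, Pi.inf_apply, Pi.sub_apply, Pi.single_eq_same]
        have h5 : ii q ⊓ v q ≤ v q := inf_le_right
        omega
      · simp only [Pi.inf_apply, Pi.sub_apply, Pi.single_eq_of_ne hr]
        simpa using (inf_le_left : ii r ⊓ v r ≤ ii r)
    have h3 := condExp_condExp_of_le (μ := μ) (f := m ∘ T ii)
      (hfilt _ _ hle2) (h𝒢le (ii - Pi.single q 1))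
    refine h2.trans (h3.symm.trans ?_)
    refine (condExp_congr_ae hbase).trans ?_
    rw [condExp_zero]
  -- the one-parameter filtration ℋ
  set w : ℕ → ℕ → (Fin d → ℤ) := fun j k r => if r = q then (j:ℤ) - 1 else (k:ℤ) with hw
  have hwmono_k : ∀ j : ℕ, Monotone (fun k : ℕ => w j k) := by
    intro j k k' hk r
    simp only [hw]
    split
    · exact le_rfl
    · exact_mod_cast hk
  have hwmono_j : ∀ (j j' k : ℕ), j ≤ j' → w j k ≤ w j' k := by
    intro j j' k hj r
    simp only [hw]
    split
    · omega
    · exact le_rfl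
  set ℱ : Filtration ℕ m0 :=
    { seq := fun j => ⨆ k, MeasurableSpace.comap (T (w j k)) F0,
      mono' := fun j j' hj => iSup_mono fun k => hfilt _ _ (hwmono_j j j' k hj),
      le' := fun j => iSup_le fun k => h𝒢le _ } with hℱ
  have hzeroℱ : ∀ (ii : Fin d → ℤ) (j : ℕ), (j:ℤ) ≤ ii q → μ[(m ∘ T ii) | ℱ j] =ᵐ[μ] 0 := by
    intro ii j hj
    have h0 : ∀ k, μ[(m ∘ T ii) | MeasurableSpace.comap (T (w j k)) F0] =ᵐ[μ] 0 := by
      intro k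
      refine hzero𝒢 ii (w j k) ?_
      simp only [hw, if_pos rfl]
      omega
    exact condexp_iSup_zero' (fun k => MeasurableSpace.comap (T (w j k)) F0) μ
      (fun k k' hk => hfilt _ _ (hwmono_k j hk)) (fun k => h𝒢le _) _ h0
  -- measurability / integrability of the partial sums
  have hSnmeas : ∀ n : Fin d → ℕ, Measurable[m0] (Sn d T m n) := by
    intro n
    show Measurable[m0] fun ω =>
      ∑ p ∈ Fintype.piFinset (fun r => Finset.range (n r)), m (T (fun r => ((p r : ℕ) : ℤ)) ω)
    exact Finset.measurable_sum _ (fun p _ => hmT _)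
  have hSnint : ∀ n : Fin d → ℕ, Integrable (Sn d T m n) μ := by
    intro n
    show Integrable (fun ω =>
      ∑ p ∈ Fintype.piFinset (fun r => Finset.range (n r)), m (T (fun r => ((p r : ℕ) : ℤ)) ω)) μ
    exact integrable_finset_sum _ (fun p _ => hint _)
  have hSnℱ : ∀ (n : Fin d → ℕ) (j : ℕ), n q ≤ j → StronglyMeasurable[ℱ j] (Sn d T m n) := by
    intro n j hnq
    have hterm : ∀ p ∈ Fintype.piFinset (fun r => Finset.range (n r)),
        StronglyMeasurable[ℱ j] (fun ω => m (T (fun r => ((p r : ℕ) : ℤ)) ω)) := by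
      intro p hp
      have hpmem : ∀ r, p r < n r := by
        intro r
        exact Finset.mem_range.mp (Fintype.mem_piFinset.mp hp r)
      set K : ℕ := Finset.univ.sup n with hK
      have hvle : (fun r => ((p r : ℕ) : ℤ)) ≤ w j K := by
        intro r
        simp only [hw]
        by_cases hr : r = q
        · rw [if_pos hr]
          have h1 : p r < n r := hpmem r
          have h2 : n r ≤ j := by rw [hr]; exact hnq
          omega
        · rw [if_neg hr]
          have h1 : p r < n r := hpmem r
          have h2 : n r ≤ K := Finset.le_sup (Finset.mem_univ r)
          omega
      have h2 : StronglyMeasurable[MeasurableSpace.comap (T (w j K)) F0]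
          (m ∘ T (fun r => ((p r : ℕ) : ℤ))) := hmT𝒢 _ _ hvle
      exact h2.mono (le_iSup (fun k => MeasurableSpace.comap (T (w j k)) F0) K)
    have := Finset.stronglyMeasurable_sum (m := ℱ j)
      (Fintype.piFinset (fun r => Finset.range (n r))) hterm
    rw [show Sn d T m n = ∑ p ∈ Fintype.piFinset (fun r => Finset.range (n r)),
      (fun ω => m (T (fun r => ((p r : ℕ) : ℤ)) ω)) by funext ω; simp only [Sn, Finset.sum_apply]]
    exact this
  have hMi : ∀ i' : ℕ, Measurable[m0] (Mi d T m a i') := by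
    intro i'
    show Measurable[m0] fun ω =>
      ⨆ n : dyadicSet d i', ENNReal.ofReal (|Sn d T m (n : Fin d → ℕ) ω| / a (n : Fin d → ℕ))
    exact Measurable.iSup fun n => ((hSnmeas _).abs.div_const _).ennreal_ofReal
  -- the target quantities
  set M : Ω → ℝ≥0∞ := Mi d T m a (i - 1) with hM
  set b : ℝ := x / (2 * c) with hb
  have hbpos : 0 < b := by positivity
  set g : ℝ → ℝ≥0∞ := fun t => μ {ω | ENNReal.ofReal t < M ω} with hg
  have hganti : Antitone g := by
    intro s t hst
    exact measure_mono fun ω h => lt_of_le_of_lt (ENNReal.ofReal_le_ofReal hst) h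
  have hgmeas : Measurable g := hganti.measurable
  have hR : (∫⁻ u in Set.Ioi (1 : ℝ),
        μ {ω | ENNReal.ofReal (u * x / (2 * c)) < Mi d T m a (i - 1) ω})
      = (ENNReal.ofReal b)⁻¹ * ∫⁻ t in Set.Ioi b, g t := by
    have h1 : ∀ u : ℝ, u * x / (2 * c) = u * b := by
      intro u; rw [hb]; ring
    calc (∫⁻ u in Set.Ioi (1 : ℝ), μ {ω | ENNReal.ofReal (u * x / (2 * c)) < Mi d T m a (i-1) ω})
        = ∫⁻ u in Set.Ioi (1 : ℝ), g (u * b) := by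
          refine lintegral_congr fun u => ?_
          rw [hg]
          simp only [h1 u, hM]
      _ = (ENNReal.ofReal b)⁻¹ * ∫⁻ t in Set.Ioi b, g t := subst_mul' b hbpos g hgmeas
  rw [hR]
  by_cases hMtop : μ {ω | M ω = ⊤} = 0
  · -- a.e. finite case
    have hMfin : ∀ᵐ ω ∂μ, M ω ≠ ⊤ := by
      rw [ae_iff]
      simpa using hMtop
    set Z : Ω → ℝ := fun ω => (M ω).toReal with hZ
    have hZmeas : Measurable[m0] Z := (hMi (i-1)).ennreal_toReal
    have hZ0 : 0 ≤ Z := fun ω => ENNReal.toReal_nonneg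
    have hMZ : ∀ᵐ ω ∂μ, M ω = ENNReal.ofReal (Z ω) := by
      filter_upwards [hMfin] with ω hω
      rw [hZ]
      exact (ENNReal.ofReal_toReal hω).symm
    have hgZ : ∀ t : ℝ, 0 < t → g t = μ {ω | t < Z ω} := by
      intro t ht
      refine measure_congr ?_
      filter_upwards [hMZ] with ω hω
      have : (ENNReal.ofReal t < M ω) = (t < Z ω) := by
        rw [hω, eq_iff_iff]
        exact ENNReal.ofReal_lt_ofReal_iff_of_nonneg ht.le
      exact this
    by_cases hJ : ∫⁻ ω, ENNReal.ofReal (Z ω) ∂μ = ⊤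
    · -- infinite integral: RHS is infinite
      have hlayerZ := lintegral_eq_lintegral_meas_lt μ
        (Filter.Eventually.of_forall hZ0) hZmeas.aemeasurable
      have hsplit : (∫⁻ t in Set.Ioi (0:ℝ), μ {ω | t < Z ω})
          = (∫⁻ t in Set.Ioc (0:ℝ) b, μ {ω | t < Z ω})
            + ∫⁻ t in Set.Ioi b, μ {ω | t < Z ω} := by
        rw [← lintegral_union measurableSet_Ioi (Set.Ioc_disjoint_Ioi le_rfl),
          Set.Ioc_union_Ioi_eq_Ioi hbpos.le]
      have hIoc : (∫⁻ t in Set.Ioc (0:ℝ) b, μ {ω | t < Z ω}) ≠ ⊤ := by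
        refine ne_top_of_le_ne_top ?_ (lintegral_mono fun t => prob_le_one)
        rw [setLIntegral_one, Real.volume_Ioc]
        exact ENNReal.ofReal_ne_top
      have htail : (∫⁻ t in Set.Ioi b, μ {ω | t < Z ω}) = ⊤ := by
        by_contra hne
        rw [hlayerZ, hsplit] at hJ
        exact (ENNReal.add_ne_top.2 ⟨hIoc, hne⟩) hJ
      have hgt : (∫⁻ t in Set.Ioi b, g t) = ⊤ := by
        rw [setLIntegral_congr_fun measurableSet_Ioi
          (fun t htb => hgZ t (lt_trans hbpos htb))]
        exact htail
      rw [hgt, ENNReal.mul_top (by simp [ENNReal.inv_ne_zero])]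
      exact le_top
    · -- integrable case : Doob's inequality
      have hZint : Integrable Z μ := by
        refine integrable_toReal_of_lintegral_ne_top (hMi (i-1)).aemeasurable ?_
        rw [lintegral_congr_ae hMZ]
        exact hJ
      have hkey : ∀ᵐ ω ∂μ, ∀ nn : dyadicSet d i,
          |Sn d T m (nn : Fin d → ℕ) ω| / a (nn : Fin d → ℕ)
            ≤ c * (μ[Z | ℱ ((nn : Fin d → ℕ) q)]) ω := by
        rw [ae_all_iff]
        rintro ⟨n, hn⟩
        show ∀ᵐ ω ∂μ, |Sn d T m n ω| / a n ≤ c * (μ[Z | ℱ (n q)]) ω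
        have ht1 : 1 ≤ n q := hn.1 q
        have h2k : 2 ^ (Nat.log2 (n q)) ≤ n q := Nat.log2_self_le (by omega)
        have htN : n q < 2 ^ (Nat.log2 (n q) + 1) := Nat.lt_log2_self
        set n' : Fin d → ℕ := Function.update n q (2 ^ (Nat.log2 (n q) + 1)) with hn'
        have hn'q : ∀ r, n r ≤ n' r := by
          intro r
          rcases eq_or_ne r q with hr | hr
          · rw [hr, hn', Function.update_self]; omega
          · rw [hn', Function.update_of_ne hr]
        have hn'mem : n' ∈ dyadicSet d (i - 1) := by
          constructor
          · intro r
            rcases eq_or_ne r q with hr | hr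
            · rw [hr, hn', Function.update_self]
              exact Nat.one_le_two_pow
            · rw [hn', Function.update_of_ne hr]; exact hn.1 r
          · intro r hr
            rcases eq_or_ne r q with hre | hre
            · exact ⟨Nat.log2 (n q) + 1, by rw [hre, hn', Function.update_self]⟩
            · have hri : i ≤ (r : ℕ) := by
                have hrq : (r : ℕ) ≠ i - 1 := by
                  intro hcon
                  exact hre (Fin.ext (by simp [hqdef, hcon]))
                omega
              rw [hn', Function.update_of_ne hre]
              exact hn.2 r hri
        have haN : a n' ≤ c * a n := by
          have h1 := hca (Function.update n q (2 ^ Nat.log2 (n q))) q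
          rw [Function.update_self, Function.update_idem] at h1
          have e1 : (2 : ℕ) * 2 ^ Nat.log2 (n q) = 2 ^ (Nat.log2 (n q) + 1) := by
            rw [pow_succ]; ring
          rw [e1, ← hn'] at h1
          have h2 : a (Function.update n q (2 ^ Nat.log2 (n q))) ≤ a n := by
            refine hamono _ _ fun r => ?_
            rcases eq_or_ne r q with hr | hr
            · rw [hr, Function.update_self]; exact h2k
            · rw [Function.update_of_ne hr]
          nlinarith
        have hIsub : Fintype.piFinset (fun r => Finset.range (n r)) ⊆
            Fintype.piFinset (fun r => Finset.range (n' r)) :=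
          Fintype.piFinset_subset _ _ fun r => Finset.range_subset_range.2 (hn'q r)
        set Dm : Finset (Fin d → ℕ) :=
          Fintype.piFinset (fun r => Finset.range (n' r)) \
            Fintype.piFinset (fun r => Finset.range (n r)) with hDm
        set D : Ω → ℝ := fun ω => ∑ p ∈ Dm, m (T (fun r => ((p r : ℕ) : ℤ)) ω) with hD
        have hDint : Integrable D μ := by
          rw [hD]
          exact integrable_finset_sum _ (fun p _ => hint _)
        have hsplit : Sn d T m n' = Sn d T m n + D := by
          funext ω
          show Sn d T m n' ω = Sn d T m n ω + D ω
          rw [hD]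
          simp only [Sn]
          rw [← Finset.sum_sdiff hIsub, ← hDm]
          exact add_comm _ _
        have hcondD : μ[D | ℱ (n q)] =ᵐ[μ] 0 := by
          have hDint' : ∀ p ∈ Dm,
              Integrable (fun ω => m (T (fun r => ((p r : ℕ) : ℤ)) ω)) μ := fun p _ => hint _
          have hDe : D = ∑ p ∈ Dm, (fun ω => m (T (fun r => ((p r : ℕ) : ℤ)) ω)) := by
            funext ω
            rw [hD, Finset.sum_apply]
          have h1 : μ[D | ℱ (n q)] =ᵐ[μ]
              ∑ p ∈ Dm, μ[(fun ω => m (T (fun r => ((p r : ℕ) : ℤ)) ω)) | ℱ (n q)] := by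
            rw [hDe]
            exact condExp_finsetSum hDint' _
          have h0 : ∀ p ∈ Dm,
              μ[(fun ω => m (T (fun r => ((p r : ℕ) : ℤ)) ω)) | ℱ (n q)] =ᵐ[μ] 0 := by
            intro p hp
            obtain ⟨hp', hpn⟩ := Finset.mem_sdiff.mp hp
            have hpq : n q ≤ p q := by
              by_contra hlt
              push_neg at hlt
              apply hpn
              refine Fintype.mem_piFinset.2 fun r => Finset.mem_range.2 ?_
              rcases eq_or_ne r q with hr | hr
              · rw [hr]; exact hlt
              · have hh := Finset.mem_range.1 (Fintype.mem_piFinset.1 hp' r)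
                rwa [hn', Function.update_of_ne hr] at hh
            refine hzeroℱ (fun r => ((p r : ℕ) : ℤ)) (n q) ?_
            show ((n q : ℕ) : ℤ) ≤ ((p q : ℕ) : ℤ)
            exact_mod_cast hpq
          refine h1.trans ?_
          have hall : ∀ᵐ ω ∂μ, ∀ p ∈ (Dm : Set (Fin d → ℕ)),
              (μ[(fun ω => m (T (fun r => ((p r : ℕ) : ℤ)) ω)) | ℱ (n q)]) ω = 0 := by
            rw [ae_ball_iff (Finset.countable_toSet Dm)]
            intro p hp
            exact h0 p hp
          filter_upwards [hall] with ω hω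
          simp only [Finset.sum_apply, Pi.zero_apply]
          exact Finset.sum_eq_zero fun p hp => hω p (Finset.mem_coe.2 hp)
        have hSnSM : StronglyMeasurable[ℱ (n q)] (Sn d T m n) := hSnℱ n (n q) le_rfl
        have hcondSn : μ[Sn d T m n' | ℱ (n q)] =ᵐ[μ] Sn d T m n := by
          have h1 : μ[Sn d T m n' | ℱ (n q)] =ᵐ[μ]
              μ[Sn d T m n | ℱ (n q)] + μ[D | ℱ (n q)] := by
            rw [hsplit]
            exact condExp_add (hSnint n) hDint _
          have h2 : μ[Sn d T m n | ℱ (n q)] = Sn d T m n :=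
            condExp_of_stronglyMeasurable (ℱ.le _) hSnSM (hSnint n)
          refine h1.trans ?_
          rw [h2]
          filter_upwards [hcondD] with ω hω
          show Sn d T m n ω + (μ[D | ℱ (n q)]) ω = Sn d T m n ω
          rw [hω]
          simp
        set A : Ω → ℝ := fun ω => |Sn d T m n' ω| with hA
        have hAint : Integrable A μ := (hSnint n').abs
        have habs1 : μ[Sn d T m n' | ℱ (n q)] ≤ᵐ[μ] μ[A | ℱ (n q)] :=
          condExp_mono (hSnint n') hAint (Filter.Eventually.of_forall fun ω => le_abs_self _)
        have habs2 : μ[-(Sn d T m n') | ℱ (n q)] ≤ᵐ[μ] μ[A | ℱ (n q)] :=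
          condExp_mono (hSnint n').neg hAint (Filter.Eventually.of_forall fun ω => neg_le_abs _)
        have hneg : μ[-(Sn d T m n') | ℱ (n q)] =ᵐ[μ] -μ[Sn d T m n' | ℱ (n q)] :=
          condExp_neg _ _
        have hAZ : A ≤ᵐ[μ] fun ω => a n' * Z ω := by
          filter_upwards [hMZ] with ω hω
          have hle : ENNReal.ofReal (|Sn d T m n' ω| / a n') ≤ M ω := by
            show ENNReal.ofReal (|Sn d T m n' ω| / a n') ≤
              ⨆ p : dyadicSet d (i - 1), ENNReal.ofReal (|Sn d T m (p : Fin d → ℕ) ω| / a (p : Fin d → ℕ))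
            exact le_iSup (fun p : dyadicSet d (i - 1) =>
              ENNReal.ofReal (|Sn d T m (p : Fin d → ℕ) ω| / a (p : Fin d → ℕ)))
              (⟨n', hn'mem⟩ : dyadicSet d (i - 1))
          rw [hω] at hle
          have h3 : |Sn d T m n' ω| / a n' ≤ Z ω := (ENNReal.ofReal_le_ofReal_iff (hZ0 ω)).1 hle
          have h4 : |Sn d T m n' ω| ≤ Z ω * a n' := (div_le_iff₀ (hapos n')).1 h3
          show |Sn d T m n' ω| ≤ a n' * Z ω
          linarith [h4]
        have hcondA : μ[A | ℱ (n q)] ≤ᵐ[μ] μ[(fun ω => a n' * Z ω) | ℱ (n q)] :=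
          condExp_mono hAint (hZint.const_mul _) hAZ
        have hsmul : μ[(fun ω => a n' * Z ω) | ℱ (n q)]
            =ᵐ[μ] fun ω => a n' * (μ[Z | ℱ (n q)]) ω := by
          have he : (fun ω => a n' * Z ω) = a n' • Z := rfl
          rw [he]
          refine (condExp_smul (μ := μ) (m := (ℱ (n q) : MeasurableSpace Ω)) (a n') Z).trans ?_
          exact Filter.Eventually.of_forall fun ω => by simp [smul_eq_mul]
        have hGnn : 0 ≤ᵐ[μ] μ[Z | ℱ (n q)] :=
          condExp_nonneg (Filter.Eventually.of_forall hZ0)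
        filter_upwards [hcondSn, habs1, habs2, hneg, hcondA, hsmul, hGnn]
          with ω h1 h2 h3 h4 h5 h6 h7
        have habs : |Sn d T m n ω| ≤ (μ[A | ℱ (n q)]) ω := by
          rw [← h1]
          have h8 := h3
          rw [h4, Pi.neg_apply] at h8
          exact abs_le.2 ⟨by linarith, h2⟩
        have h9 : (μ[A | ℱ (n q)]) ω ≤ a n' * (μ[Z | ℱ (n q)]) ω := h5.trans (le_of_eq h6)
        have h10 : a n' * (μ[Z | ℱ (n q)]) ω ≤ c * a n * (μ[Z | ℱ (n q)]) ω :=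
          mul_le_mul_of_nonneg_right haN h7
        rw [div_le_iff₀ (hapos n)]
        calc |Sn d T m n ω| ≤ c * a n * (μ[Z | ℱ (n q)]) ω := habs.trans (h9.trans h10)
          _ = c * (μ[Z | ℱ (n q)]) ω * a n := by ring
      have hincl : {ω | ENNReal.ofReal x < Mi d T m a i ω} ≤ᵐ[μ]
          {ω | ∃ j : ℕ, 2 * b < (μ[Z | ℱ j]) ω} := by
        filter_upwards [hkey] with ω hω hmem
        have hmem' : ENNReal.ofReal x < ⨆ p : dyadicSet d i,
            ENNReal.ofReal (|Sn d T m (p : Fin d → ℕ) ω| / a (p : Fin d → ℕ)) := hmem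
        obtain ⟨p, hp⟩ := lt_iSup_iff.1 hmem'
        have hxlt : x < |Sn d T m (p : Fin d → ℕ) ω| / a (p : Fin d → ℕ) :=
          (ENNReal.ofReal_lt_ofReal_iff_of_nonneg hx.le).1 hp
        refine ⟨(p : Fin d → ℕ) q, ?_⟩
        have hcG : x < c * (μ[Z | ℱ ((p : Fin d → ℕ) q)]) ω := lt_of_lt_of_le hxlt (hω p)
        have h2b : 2 * b = x / c := by
          rw [hb]
          rw [eq_div_iff (ne_of_gt hc)]
          field_simp
        rw [h2b, div_lt_iff₀ hc]
        linarith
      have hmaxint : Integrable (fun ω => max (Z ω - b) 0) μ :=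
        (hZint.sub (integrable_const b)).pos_part
      calc μ {ω | ENNReal.ofReal x < Mi d T m a i ω}
          ≤ μ {ω | ∃ j : ℕ, 2 * b < (μ[Z | ℱ j]) ω} := measure_mono_ae hincl
        _ ≤ (ENNReal.ofReal b)⁻¹ * ENNReal.ofReal (∫ ω, max (Z ω - b) 0 ∂μ) :=
            doob_tail' ℱ Z hZint hZ0 b hbpos
        _ = (ENNReal.ofReal b)⁻¹ * ∫⁻ t in Set.Ioi b, g t := by
            congr 1
            rw [ofReal_integral_eq_lintegral_ofReal hmaxint
              (Filter.Eventually.of_forall fun ω => le_max_right _ _)]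
            rw [← tail_lintegral' μ Z hZmeas b hbpos]
            exact setLIntegral_congr_fun measurableSet_Ioi
              (fun t htb => (hgZ t (lt_trans hbpos htb)).symm)

  · -- M = ⊤ with positive probability : RHS is infinite
    have hmeastop : MeasurableSet[m0] {ω | M ω = ⊤} := (hMi (i-1)) (measurableSet_singleton ⊤)
    have hge : ∀ t : ℝ, μ {ω | M ω = ⊤} ≤ g t := by
      intro t
      refine measure_mono fun ω hω => ?_
      simp only [Set.mem_setOf_eq] at hω ⊢
      rw [hω]
      exact ENNReal.ofReal_lt_top
    have htail : (∫⁻ t in Set.Ioi b, g t) = ⊤ := by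
      have h1 : (∫⁻ t in Set.Ioi b, μ {ω | M ω = ⊤}) ≤ ∫⁻ t in Set.Ioi b, g t :=
        lintegral_mono fun t => hge t
      have h2 : (∫⁻ t in Set.Ioi b, μ {ω | M ω = ⊤}) = ⊤ := by
        rw [setLIntegral_const, Real.volume_Ioi, ENNReal.mul_top']
        simp [hMtop]
      exact top_le_iff.1 (h2 ▸ h1)
    rw [htail, ENNReal.mul_top (by simp [ENNReal.inv_ne_zero])]
    exact le_top

theorem stmt13 (d : ℕ) (hd : 1 ≤ d)
    {Ω : Type*} [m0 : MeasurableSpace Ω] (μ : Measure Ω) [IsProbabilityMeasure μ]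
    (T : (Fin d → ℤ) → Ω → Ω)
    (hTmeas : ∀ i, Measurable (T i))
    (hTpres : ∀ i, MeasurePreserving (T i) μ μ)
    (hTact : ∀ i j ω, T i (T j ω) = T (i + j) ω) (hT0 : ∀ ω, T 0 ω = ω)
    (F0 : MeasurableSpace Ω) (hF0 : F0 ≤ m0)
    -- `(T^{-i} F0)_i` is a filtration
    (hfilt : ∀ i j : Fin d → ℤ, i ≤ j →
      MeasurableSpace.comap (T i) F0 ≤ MeasurableSpace.comap (T j) F0)
    -- the filtration is commuting
    (hcomm : ∀ Y : Ω → ℝ, Integrable Y μ → ∀ i j : Fin d → ℤ,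
      μ[ μ[Y | MeasurableSpace.comap (T i) F0] | MeasurableSpace.comap (T j) F0]
        =ᵐ[μ] μ[Y | MeasurableSpace.comap (T (i ⊓ j)) F0])
    (m : Ω → ℝ) (hmint : Integrable m μ) (hmmeas : StronglyMeasurable[F0] m)
    -- orthomartingale differences: `E[m | T_q F0] = 0` for every `q`
    (hortho : ∀ q : Fin d,
      μ[m | MeasurableSpace.comap (T (-Pi.single q 1)) F0] =ᵐ[μ] 0)
    (a : (Fin d → ℕ) → ℝ) (hapos : ∀ n, 0 < a n)
    (hamono : ∀ n n' : Fin d → ℕ, n ≤ n' → a n ≤ a n')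
    (c : ℝ) (hc : 0 < c)
    (hca : ∀ (n : Fin d → ℕ) (q : Fin d), a (Function.update n q (2 * n q)) ≤ c * a n)
    (i : ℕ) (hi1 : 1 ≤ i) (hid : i ≤ d) (x : ℝ) (hx : 0 < x) :
    μ {ω | ENNReal.ofReal x < Mi d T m a i ω} ≤
      ∫⁻ u in Set.Ioi (1 : ℝ),
        μ {ω | ENNReal.ofReal (u * x / (2 * c)) < Mi d T m a (i - 1) ω} := by
  exact @stmt13_aux d hd Ω F0 m0 μ ‹_› T hTmeas hTpres hTact hT0 hF0 hfilt hcomm m hmint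
    hmmeas hortho a hapos hamono c hc hca i hi1 hid x hx
end

section
/- Let $(V_n)_{n\ge 1}$ be a subadditive sequence of non-negative reals (i.e., $V_{m+n}\le V_m+V_n$). Then there is a universal constant $C$ such that $\sum_{k\ge 0} 2^{-k/2} V_{2^k} \le C \sum_{n\ge 1} n^{-3/2} V_n$. -/
open Finset ENNReal

theorem stmt17 :
    ∃ C > (0 : ℝ),
      ∀ V : ℕ → ℝ, (∀ n, 0 ≤ V n) →
        (∀ m n, 1 ≤ m → 1 ≤ n → V (m + n) ≤ V m + V n) →
        ∑' k : ℕ, ENNReal.ofReal ((2 : ℝ) ^ (-(k : ℝ) / 2) * V (2 ^ k)) ≤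
          ENNReal.ofReal C *
            ∑' n : ℕ, ENNReal.ofReal (V (n + 1) / ((n : ℝ) + 1) ^ ((3 : ℝ) / 2)) := by
  refine ⟨17, by norm_num, ?_⟩
  intro V hV hsub
  set g : ℕ → ℝ≥0∞ := fun n => ENNReal.ofReal (V (n + 1) / ((n : ℝ) + 1) ^ ((3 : ℝ) / 2)) with hg
  set G : ℝ≥0∞ := ∑' n : ℕ, g n with hG
  -- pairing inequality
  have key : ∀ N : ℕ, 2 ≤ N → (N : ℝ) * V N ≤ 4 * ∑ m ∈ range (N - 1), V (m + 1) := by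
    intro N hN
    have h1 : ∀ m ∈ range (N - 1), V N ≤ V (m + 1) + V (N - 1 - m) := by
      intro m hm
      have hm' : m < N - 1 := mem_range.mp hm
      have hEq : (m + 1) + (N - 1 - m) = N := by omega
      calc V N = V ((m + 1) + (N - 1 - m)) := by rw [hEq]
        _ ≤ V (m + 1) + V (N - 1 - m) := hsub _ _ (by omega) (by omega)
    have h2 := Finset.sum_le_sum h1
    rw [Finset.sum_const, Finset.sum_add_distrib, card_range] at h2
    have h3 : ∑ m ∈ range (N - 1), V (N - 1 - m) = ∑ m ∈ range (N - 1), V (m + 1) := by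
      rw [← Finset.sum_range_reflect (fun j => V (j + 1)) (N - 1)]
      exact Finset.sum_congr rfl fun m hm => by
        have := mem_range.mp hm
        congr 1
        omega
    rw [h3] at h2
    have h4 : ((N : ℝ) - 1) * V N ≤ 2 * ∑ m ∈ range (N - 1), V (m + 1) := by
      have hc : ((N - 1 : ℕ) : ℝ) = (N : ℝ) - 1 := by
        rw [Nat.cast_sub (by omega : 1 ≤ N)]; norm_num
      rw [nsmul_eq_mul, hc] at h2
      linarith
    have hVN := hV N
    have hN2 : (2 : ℝ) ≤ N := by exact_mod_cast hN
    nlinarith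
  -- real per-k bound, k ≥ 1
  have stepA : ∀ k : ℕ, 1 ≤ k →
      (2 : ℝ) ^ (-(k : ℝ) / 2) * V (2 ^ k) ≤
        ∑ m ∈ range (2 ^ k - 1), 4 * (2 : ℝ) ^ (-(3 * (k : ℝ)) / 2) * V (m + 1) := by
    intro k hk
    have hN : 2 ≤ 2 ^ k := by
      calc 2 = 2 ^ 1 := rfl
        _ ≤ 2 ^ k := Nat.pow_le_pow_right (by norm_num) hk
    have hkey := key (2 ^ k) hN
    set S := ∑ m ∈ range (2 ^ k - 1), V (m + 1) with hS
    have hNpos : (0 : ℝ) < ((2 : ℕ) ^ k : ℕ) := by positivity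
    have hsplit : (2 : ℝ) ^ (-(3 * (k : ℝ)) / 2) =
        (2 : ℝ) ^ (-(k : ℝ) / 2) * (((2 : ℕ) ^ k : ℕ) : ℝ)⁻¹ := by
      have he : -(3 * (k : ℝ)) / 2 = -(k : ℝ) / 2 + -(k : ℝ) := by ring
      rw [he, Real.rpow_add (by norm_num), Real.rpow_neg (by norm_num), Real.rpow_natCast]
      push_cast
      ring
    have h5 : V (2 ^ k) ≤ 4 * S / (((2 : ℕ) ^ k : ℕ) : ℝ) := by
      rw [le_div_iff₀ hNpos]
      push_cast at hkey ⊢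
      linarith
    have hc : (0 : ℝ) ≤ (2 : ℝ) ^ (-(k : ℝ) / 2) := by positivity
    calc (2 : ℝ) ^ (-(k : ℝ) / 2) * V (2 ^ k)
        ≤ (2 : ℝ) ^ (-(k : ℝ) / 2) * (4 * S / (((2 : ℕ) ^ k : ℕ) : ℝ)) :=
          mul_le_mul_of_nonneg_left h5 hc
      _ = 4 * ((2 : ℝ) ^ (-(k : ℝ) / 2) * (((2 : ℕ) ^ k : ℕ) : ℝ)⁻¹) * S := by ring
      _ = ∑ m ∈ range (2 ^ k - 1), 4 * (2 : ℝ) ^ (-(3 * (k : ℝ)) / 2) * V (m + 1) := by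
          rw [← Finset.mul_sum, ← hS, hsplit]
  -- the double array
  set a : ℕ → ℕ → ℝ≥0∞ := fun k n =>
    if n + 2 ≤ 2 ^ k then ENNReal.ofReal (4 * (2 : ℝ) ^ (-(3 * (k : ℝ)) / 2) * V (n + 1))
    else 0 with ha
  have stepA' : ∀ k : ℕ, 1 ≤ k →
      ENNReal.ofReal ((2 : ℝ) ^ (-(k : ℝ) / 2) * V (2 ^ k)) ≤ ∑' n, a k n := by
    intro k hk
    have hN : 2 ≤ 2 ^ k := by
      calc 2 = 2 ^ 1 := rfl
        _ ≤ 2 ^ k := Nat.pow_le_pow_right (by norm_num) hk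
    calc ENNReal.ofReal ((2 : ℝ) ^ (-(k : ℝ) / 2) * V (2 ^ k))
        ≤ ENNReal.ofReal (∑ m ∈ range (2 ^ k - 1), 4 * (2 : ℝ) ^ (-(3 * (k : ℝ)) / 2) * V (m + 1)) :=
          ENNReal.ofReal_le_ofReal (stepA k hk)
      _ = ∑ m ∈ range (2 ^ k - 1),
            ENNReal.ofReal (4 * (2 : ℝ) ^ (-(3 * (k : ℝ)) / 2) * V (m + 1)) :=
          ENNReal.ofReal_sum_of_nonneg fun m _ => mul_nonneg (by positivity) (hV _)
      _ = ∑ m ∈ range (2 ^ k - 1), a k m := by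
          refine Finset.sum_congr rfl fun m hm => ?_
          have hm' := mem_range.mp hm
          rw [ha]
          simp only
          rw [if_pos (by omega)]
      _ ≤ ∑' n, a k n := ENNReal.sum_le_tsum _
  -- per-n bound on column sums
  have stepB : ∀ n : ℕ, ∑' k, a k n ≤ ENNReal.ofReal 8 * g n := by
    intro n
    set k0 := Nat.clog 2 (n + 2) with hk0
    have hcond : ∀ k, n + 2 ≤ 2 ^ k ↔ k0 ≤ k := fun k => (Nat.clog_le_iff_le_pow (by norm_num)).symm
    have hfin : ∑ i ∈ range k0, a i n = 0 := by
      refine Finset.sum_eq_zero fun i hi => ?_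
      have hi' := mem_range.mp hi
      rw [ha]
      simp only
      rw [if_neg]
      rw [hcond]
      omega
    have hsplit := Summable.sum_add_tsum_nat_add' (f := fun k => a k n) (k := k0) ENNReal.summable
    -- bound on 2^(-3k0/2)
    have hbase : ((n : ℝ) + 1) ≤ (2 : ℝ) ^ (k0 : ℕ) := by
      have h1 : n + 2 ≤ 2 ^ k0 := Nat.le_pow_clog (by norm_num) _
      have h2 : ((n + 2 : ℕ) : ℝ) ≤ (((2 : ℕ) ^ k0 : ℕ) : ℝ) := by exact_mod_cast h1
      push_cast at h2
      linarith
    have hk0bound : (2 : ℝ) ^ (-(3 * (k0 : ℝ)) / 2) ≤ ((n : ℝ) + 1) ^ (-(3 : ℝ) / 2) := by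
      have he : (2 : ℝ) ^ (-(3 * (k0 : ℝ)) / 2) = ((2 : ℝ) ^ (k0 : ℕ)) ^ (-(3 : ℝ) / 2) := by
        rw [← Real.rpow_natCast 2 k0, ← Real.rpow_mul (by norm_num)]
        congr 1
        ring
      rw [he]
      exact Real.rpow_le_rpow_of_nonpos (by positivity) hbase (by norm_num)
    have hhalf : (2 : ℝ) ^ (-(3 : ℝ) / 2) ≤ 1 / 2 := by
      have h1 : (2 : ℝ) ^ (-(3 : ℝ) / 2) ≤ (2 : ℝ) ^ (-(1 : ℝ)) :=
        Real.rpow_le_rpow_of_exponent_le (by norm_num) (by norm_num)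
      rw [Real.rpow_neg_one] at h1
      linarith
    have hterm : ∀ j : ℕ, a (j + k0) n ≤
        ENNReal.ofReal (4 * (V (n + 1) / ((n : ℝ) + 1) ^ ((3 : ℝ) / 2))) *
          (ENNReal.ofReal (1 / 2)) ^ j := by
      intro j
      rw [ha]
      simp only
      rw [if_pos ((hcond _).mpr (by omega))]
      rw [← ENNReal.ofReal_pow (by norm_num), ← ENNReal.ofReal_mul (mul_nonneg (by norm_num) (div_nonneg (hV _) (by positivity)))]
      refine ENNReal.ofReal_le_ofReal ?_
      have hsplit2 : (2 : ℝ) ^ (-(3 * ((j + k0 : ℕ) : ℝ)) / 2) =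
          (2 : ℝ) ^ (-(3 * (k0 : ℝ)) / 2) * ((2 : ℝ) ^ (-(3 : ℝ) / 2)) ^ j := by
        rw [← Real.rpow_natCast ((2 : ℝ) ^ (-(3 : ℝ) / 2)) j, ← Real.rpow_mul (by norm_num),
          ← Real.rpow_add (by norm_num)]
        congr 1
        push_cast
        ring
      rw [hsplit2]
      have hVn := hV (n + 1)
      have hpow1 : ((2 : ℝ) ^ (-(3 : ℝ) / 2)) ^ j ≤ (1 / 2 : ℝ) ^ j :=
        pow_le_pow_left₀ (by positivity) hhalf j
      have hneg : ((n : ℝ) + 1) ^ (-(3 : ℝ) / 2) = (((n : ℝ) + 1) ^ ((3 : ℝ) / 2))⁻¹ := by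
        rw [← Real.rpow_neg (by positivity)]
        norm_num
      have hpow0 : (0 : ℝ) ≤ ((2 : ℝ) ^ (-(3 : ℝ) / 2)) ^ j := by positivity
      have h2 : (2 : ℝ) ^ (-(3 * (k0 : ℝ)) / 2) * ((2 : ℝ) ^ (-(3 : ℝ) / 2)) ^ j ≤
          ((n : ℝ) + 1) ^ (-(3 : ℝ) / 2) * (1 / 2 : ℝ) ^ j := by
        apply mul_le_mul hk0bound hpow1 hpow0 (by positivity)
      calc 4 * ((2 : ℝ) ^ (-(3 * (k0 : ℝ)) / 2) * ((2 : ℝ) ^ (-(3 : ℝ) / 2)) ^ j) * V (n + 1)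
          ≤ 4 * (((n : ℝ) + 1) ^ (-(3 : ℝ) / 2) * (1 / 2 : ℝ) ^ j) * V (n + 1) := by
            apply mul_le_mul_of_nonneg_right (by linarith) hVn
        _ = 4 * (V (n + 1) / ((n : ℝ) + 1) ^ ((3 : ℝ) / 2)) * (1 / 2 : ℝ) ^ j := by
            rw [hneg]; ring
    have hhalfE : ENNReal.ofReal (1 / 2) = (2 : ℝ≥0∞)⁻¹ := by
      rw [one_div, ENNReal.ofReal_inv_of_pos (by norm_num)]
      norm_num
    calc ∑' k, a k n = ∑ i ∈ range k0, a i n + ∑' j, a (j + k0) n := hsplit.symm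
      _ = ∑' j, a (j + k0) n := by rw [hfin, zero_add]
      _ ≤ ∑' j, ENNReal.ofReal (4 * (V (n + 1) / ((n : ℝ) + 1) ^ ((3 : ℝ) / 2))) *
            (ENNReal.ofReal (1 / 2)) ^ j := ENNReal.tsum_le_tsum hterm
      _ = ENNReal.ofReal (4 * (V (n + 1) / ((n : ℝ) + 1) ^ ((3 : ℝ) / 2))) *
            ∑' j : ℕ, (ENNReal.ofReal (1 / 2)) ^ j := ENNReal.tsum_mul_left
      _ = ENNReal.ofReal (4 * (V (n + 1) / ((n : ℝ) + 1) ^ ((3 : ℝ) / 2))) * 2 := by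
          rw [hhalfE, ENNReal.tsum_geometric, ENNReal.one_sub_inv_two, inv_inv]
      _ ≤ ENNReal.ofReal 8 * g n := by
          rw [hg]
          simp only
          rw [ENNReal.ofReal_mul (by norm_num : (0:ℝ) ≤ 4)]
          rw [show (ENNReal.ofReal 8) = ENNReal.ofReal 4 * 2 by
            rw [show (8 : ℝ) = 4 * 2 by norm_num, ENNReal.ofReal_mul (by norm_num)]
            norm_num]
          ring_nf
          exact le_rfl
  -- assemble
  have hg0 : ENNReal.ofReal ((2 : ℝ) ^ (-((0 : ℕ) : ℝ) / 2) * V (2 ^ (0 : ℕ))) = g 0 := by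
    rw [hg]
    simp only
    norm_num
  calc ∑' k : ℕ, ENNReal.ofReal ((2 : ℝ) ^ (-(k : ℝ) / 2) * V (2 ^ k))
      = ENNReal.ofReal ((2 : ℝ) ^ (-((0 : ℕ) : ℝ) / 2) * V (2 ^ (0 : ℕ))) +
        ∑' k : ℕ, ENNReal.ofReal ((2 : ℝ) ^ (-((k + 1 : ℕ) : ℝ) / 2) * V (2 ^ (k + 1))) :=
        tsum_eq_zero_add' ENNReal.summable
    _ ≤ g 0 + ∑' k : ℕ, ∑' n, a (k + 1) n := by
        rw [hg0]
        exact add_le_add_right (ENNReal.tsum_le_tsum fun k => stepA' (k + 1) (by omega)) _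
    _ ≤ G + ∑' k : ℕ, ∑' n, a k n := by
        refine add_le_add (ENNReal.le_tsum 0) ?_
        rw [tsum_eq_zero_add' (f := fun k => ∑' n, a k n) ENNReal.summable]
        exact le_add_self
    _ = G + ∑' n, ∑' k, a k n := by rw [ENNReal.tsum_comm]
    _ ≤ G + ∑' n, ENNReal.ofReal 8 * g n := add_le_add_right (ENNReal.tsum_le_tsum stepB) _
    _ = G + ENNReal.ofReal 8 * G := by rw [ENNReal.tsum_mul_left]
    _ ≤ ENNReal.ofReal 17 * G := by
        rw [show (ENNReal.ofReal 8) = 8 by norm_num [ENNReal.ofReal_ofNat],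
          show (ENNReal.ofReal 17) = 17 by norm_num [ENNReal.ofReal_ofNat]]
        calc G + 8 * G = 9 * G := by ring
          _ ≤ 17 * G := mul_le_mul_left (by norm_num) G
end
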